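/- arXiv:2205.04211 — 9 statements merged into one kernel-verified Lean document; each statement's English description precedes it below -/
import Mathlib

section
/- Let K be a field and T ⊆ K a proper preorder (i.e., T contains all squares, is closed under addition and multiplication, and -1 ∉ T). Then T equals the intersection of all orderings P of K (subsets with P+P ⊆ P, PP ⊆ P, P ∪ -P = K, P ∩ -P = {0}) that contain T. In particular, every proper preorder of a field extends to an ordering. -/
/-- An ordering (positive cone) of a field `K`. -/
def IsOrdering {K : Type*} [Field K] (P : Set K) : Prop :=
  (∀ a ∈ P, ∀ b ∈ P, a + b ∈ P) ∧ (∀ a ∈ P, ∀ b ∈ P, a * b ∈ P) ∧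
    (∀ a : K, a ∈ P ∨ -a ∈ P) ∧ (∀ a : K, a ∈ P → -a ∈ P → a = 0)

/-- A preorder of a field `K`: contains all squares, closed under `+` and `*`. -/
def IsPreordering {K : Type*} [Field K] (T : Set K) : Prop :=
  (∀ x : K, x ^ 2 ∈ T) ∧ (∀ a ∈ T, ∀ b ∈ T, a + b ∈ T) ∧ (∀ a ∈ T, ∀ b ∈ T, a * b ∈ T)

section AS

variable {K : Type*} [Field K]

lemma pre_zero_mem {T : Set K} (hT : IsPreordering T) : (0 : K) ∈ T := by
  simpa using hT.1 0

lemma pre_one_mem {T : Set K} (hT : IsPreordering T) : (1 : K) ∈ T := by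
  simpa using hT.1 1

/-- The extension `T + a·T`. -/
def extPre (T : Set K) (a : K) : Set K :=
  {x | ∃ t1 ∈ T, ∃ t2 ∈ T, x = t1 + a * t2}

lemma extPre_pre {T : Set K} (hT : IsPreordering T) (a : K) :
    IsPreordering (extPre T a) := by
  obtain ⟨hsq, hadd, hmul⟩ := hT
  refine ⟨fun x => ⟨x ^ 2, hsq x, 0, pre_zero_mem ⟨hsq, hadd, hmul⟩, by ring⟩, ?_, ?_⟩
  · rintro _ ⟨t1, h1, t2, h2, rfl⟩ _ ⟨s1, g1, s2, g2, rfl⟩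
    exact ⟨t1 + s1, hadd _ h1 _ g1, t2 + s2, hadd _ h2 _ g2, by ring⟩
  · rintro _ ⟨t1, h1, t2, h2, rfl⟩ _ ⟨s1, g1, s2, g2, rfl⟩
    refine ⟨t1 * s1 + a ^ 2 * (t2 * s2), hadd _ (hmul _ h1 _ g1) _
      (hmul _ (hsq a) _ (hmul _ h2 _ g2)), t1 * s2 + t2 * s1,
      hadd _ (hmul _ h1 _ g2) _ (hmul _ h2 _ g1), by ring⟩

lemma extPre_subset {T : Set K} (hT : IsPreordering T) (a : K) : T ⊆ extPre T a :=
  fun t ht => ⟨t, ht, 0, pre_zero_mem hT, by ring⟩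

lemma extPre_mem {T : Set K} (hT : IsPreordering T) (a : K) : a ∈ extPre T a :=
  ⟨0, pre_zero_mem hT, 1, pre_one_mem hT, by ring⟩

lemma extPre_proper {T : Set K} (hT : IsPreordering T) {a : K}
    (hproper : (-1 : K) ∉ T) (ha : -a ∉ T) : (-1 : K) ∉ extPre T a := by
  rintro ⟨t1, h1, t2, h2, heq⟩
  by_cases ht2 : t2 = 0
  · subst ht2
    simp only [mul_zero, add_zero] at heq
    exact hproper (by rwa [← heq] at h1)
  · refine ha ?_
    have key : -a = (1 + t1) * t2 * (t2⁻¹) ^ 2 := by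
      have h : (1 + t1 : K) = -a * t2 := by linear_combination -heq
      rw [h, sq]
      field_simp
    rw [key]
    exact hT.2.2 _ (hT.2.2 _ (hT.2.1 _ (pre_one_mem hT) _ h1) _ h2) _ (hT.1 _)

/-- Every proper preorder extends to an ordering. -/
lemma exists_ordering {T : Set K} (hT : IsPreordering T) (hproper : (-1 : K) ∉ T) :
    ∃ P : Set K, IsOrdering P ∧ T ⊆ P := by
  set S : Set (Set K) := {P | IsPreordering P ∧ (-1 : K) ∉ P ∧ T ⊆ P} with hS
  have hzorn : ∀ c ⊆ S, IsChain (· ⊆ ·) c → c.Nonempty →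
      ∃ ub ∈ S, ∀ s ∈ c, s ⊆ ub := by
    rintro c hc hchain ⟨c0, hc0⟩
    refine ⟨⋃₀ c, ⟨⟨?_, ?_, ?_⟩, ?_, ?_⟩, fun A hA => Set.subset_sUnion_of_mem hA⟩
    · intro x; exact ⟨c0, hc0, (hc hc0).1.1 x⟩
    · rintro a ⟨A, hA, haA⟩ b ⟨B, hB, hbB⟩
      rcases hchain.total hA hB with h | h
      · exact ⟨B, hB, (hc hB).1.2.1 _ (h haA) _ hbB⟩
      · exact ⟨A, hA, (hc hA).1.2.1 _ haA _ (h hbB)⟩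
    · rintro a ⟨A, hA, haA⟩ b ⟨B, hB, hbB⟩
      rcases hchain.total hA hB with h | h
      · exact ⟨B, hB, (hc hB).1.2.2 _ (h haA) _ hbB⟩
      · exact ⟨A, hA, (hc hA).1.2.2 _ haA _ (h hbB)⟩
    · rintro ⟨A, hA, hmA⟩; exact (hc hA).2.1 hmA
    · exact (hc hc0).2.2.trans (Set.subset_sUnion_of_mem hc0)
  obtain ⟨M, hTM0, hmax⟩ := zorn_subset_nonempty S hzorn T ⟨hT, hproper, subset_rfl⟩
  obtain ⟨hMpre, hMproper, hTM⟩ := hmax.1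
  have total : ∀ a : K, a ∈ M ∨ -a ∈ M := by
    intro a
    by_cases hna : -a ∈ M
    · exact Or.inr hna
    · left
      have hsub : extPre M a ⊆ M :=
        hmax.2 ⟨extPre_pre hMpre a, extPre_proper hMpre hMproper hna,
          hTM.trans (extPre_subset hMpre a)⟩ (extPre_subset hMpre a)
      exact hsub (extPre_mem hMpre a)
  refine ⟨M, ⟨hMpre.2.1, hMpre.2.2, total, ?_⟩, hTM⟩
  intro a ha hna
  by_contra h0
  exact hMproper (by
    have : (-1 : K) = a * -a * (a⁻¹) ^ 2 := by field_simp
    rw [this]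
    exact hMpre.2.2 _ (hMpre.2.2 _ ha _ hna) _ (hMpre.1 _))

end AS

/-- Every proper preorder of a field extends to an ordering, and equals the
intersection of all orderings containing it. -/
theorem stmt0 {K : Type*} [Field K] (T : Set K) (hT : IsPreordering T)
    (hproper : (-1 : K) ∉ T) :
    (∃ P : Set K, IsOrdering P ∧ T ⊆ P) ∧
      T = ⋂₀ {P : Set K | IsOrdering P ∧ T ⊆ P} := by
  refine ⟨exists_ordering hT hproper, ?_⟩
  apply subset_antisymm
  · intro t ht P hP
    exact hP.2 ht
  · intro a ha
    by_contra haT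
    have hproper' : (-1 : K) ∉ extPre T (-a) :=
      extPre_proper hT hproper (by simpa using haT)
    obtain ⟨P, hP, hTP⟩ := exists_ordering (extPre_pre hT (-a)) hproper'
    have hTP' : T ⊆ P := (extPre_subset hT (-a)).trans hTP
    have haP : a ∈ P := ha P ⟨hP, hTP'⟩
    have hnaP : -a ∈ P := hTP (extPre_mem hT (-a))
    have : a = 0 := hP.2.2.2 a haP hnaP
    exact haT (this ▸ pre_zero_mem hT)
end

section
/- If L|K is a field extension of odd degree and K is equipped with an ordering, then the ordering of K extends to an ordering of L. -/
open Polynomial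
open scoped IntermediateField

section Aux

variable {K : Type*} [Field K] {P : Set K}

namespace ArtinSchreierAux

lemma zero_mem (hP : IsOrdering P) : (0 : K) ∈ P := by
  rcases hP.2.2.1 0 with h | h
  · exact h
  · simpa using h

lemma one_mem (hP : IsOrdering P) : (1 : K) ∈ P := by
  rcases hP.2.2.1 1 with h | h
  · exact h
  · simpa using hP.2.1 _ h _ h

lemma neg_one_not_mem (hP : IsOrdering P) : (-1 : K) ∉ P := by
  intro h
  exact one_ne_zero (hP.2.2.2 1 (one_mem hP) h)

lemma sq_mem (hP : IsOrdering P) (x : K) : x ^ 2 ∈ P := by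
  rcases hP.2.2.1 x with h | h
  · simpa [sq] using hP.2.1 _ h _ h
  · have := hP.2.1 _ h _ h
    simpa [sq] using this

lemma add_pos (hP : IsOrdering P) {p q : K} (hp : p ∈ P) (hp0 : p ≠ 0) (hq : q ∈ P) :
    p + q ∈ P ∧ p + q ≠ 0 := by
  refine ⟨hP.1 _ hp _ hq, fun h => ?_⟩
  have hqn : -p ∈ P := by
    have : q = -p := by linear_combination h
    rwa [this] at hq
  exact hp0 (hP.2.2.2 p hp hqn)

lemma mul_pos' (hP : IsOrdering P) {p q : K} (hp : p ∈ P) (hp0 : p ≠ 0) (hq : q ∈ P) (hq0 : q ≠ 0) :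
    p * q ∈ P ∧ p * q ≠ 0 :=
  ⟨hP.2.1 _ hp _ hq, mul_ne_zero hp0 hq0⟩


/-- The additive submonoid generated by elements `p * x ^ 2` with `p` in (the image of) `P`. -/
def Tset (P : Set K) (L : Type*) [CommRing L] [Algebra K L] : AddSubmonoid L :=
  AddSubmonoid.closure {y | ∃ p ∈ P, ∃ x : L, y = algebraMap K L p * x ^ 2}

lemma Tset_map {L L' : Type*} [CommRing L] [Algebra K L] [CommRing L'] [Algebra K L']
    (f : L →+* L') (hf : ∀ a : K, f (algebraMap K L a) = algebraMap K L' a)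
    {x : L} (hx : x ∈ Tset P L) : f x ∈ Tset P L' := by
  induction hx using AddSubmonoid.closure_induction with
  | mem y hy =>
    obtain ⟨p, hp, z, rfl⟩ := hy
    rw [map_mul, map_pow, hf]
    exact AddSubmonoid.subset_closure ⟨p, hp, f z, rfl⟩
  | zero => simpa using AddSubmonoid.zero_mem _
  | add a b _ _ ha hb => rw [map_add]; exact AddSubmonoid.add_mem _ ha hb

lemma Tset_mul (hP : IsOrdering P) {L : Type*} [CommRing L] [Algebra K L]
    {x y : L} (hx : x ∈ Tset P L) (hy : y ∈ Tset P L) : x * y ∈ Tset P L := by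
  induction hx using AddSubmonoid.closure_induction with
  | mem a ha =>
    obtain ⟨p, hp, z, rfl⟩ := ha
    induction hy using AddSubmonoid.closure_induction with
    | mem b hb =>
      obtain ⟨q, hq, w, rfl⟩ := hb
      refine AddSubmonoid.subset_closure ⟨p * q, hP.2.1 _ hp _ hq, z * w, ?_⟩
      rw [map_mul]; ring
    | zero => simpa using AddSubmonoid.zero_mem _
    | add a b _ _ ha hb =>
      rw [mul_add]; exact AddSubmonoid.add_mem _ ha hb
  | zero => simpa using AddSubmonoid.zero_mem _
  | add a b _ _ ha hb => rw [add_mul]; exact AddSubmonoid.add_mem _ ha hb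

lemma sq_mem_Tset (hP : IsOrdering P) {L : Type*} [CommRing L] [Algebra K L] (x : L) :
    x ^ 2 ∈ Tset P L :=
  AddSubmonoid.subset_closure ⟨1, one_mem hP, x, by simp⟩

/-- "Positive-definite" polynomials: zero, or of even degree with positive leading coeff. -/
def GoodPoly (P : Set K) (q : K[X]) : Prop :=
  q ≠ 0 → Even q.natDegree ∧ q.leadingCoeff ∈ P ∧ q.leadingCoeff ≠ 0

lemma goodPoly_add (hP : IsOrdering P) {a b : K[X]} (ha : GoodPoly P a) (hb : GoodPoly P b) :
    GoodPoly P (a + b) := by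
  rcases eq_or_ne a 0 with rfl | ha0
  · simpa using hb
  rcases eq_or_ne b 0 with rfl | hb0
  · simpa using ha
  obtain ⟨hae, hal, hal0⟩ := ha ha0
  obtain ⟨hbe, hbl, hbl0⟩ := hb hb0
  rcases lt_trichotomy a.degree b.degree with h | h | h
  · intro _
    rw [natDegree_eq_of_degree_eq (degree_add_eq_right_of_degree_lt h),
      leadingCoeff_add_of_degree_lt h]
    exact ⟨hbe, hbl, hbl0⟩
  · have hlc : a.leadingCoeff + b.leadingCoeff ≠ 0 := (add_pos hP hal hal0 hbl).2
    intro _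
    have hdeg : (a + b).degree = a.degree := by
      rw [degree_add_eq_of_leadingCoeff_add_ne_zero hlc, h, max_self]
    rw [natDegree_eq_of_degree_eq hdeg, leadingCoeff_add_of_degree_eq h hlc]
    exact ⟨hae, (add_pos hP hal hal0 hbl).1, hlc⟩
  · intro _
    rw [natDegree_eq_of_degree_eq (degree_add_eq_left_of_degree_lt h),
      leadingCoeff_add_of_degree_lt' h]
    exact ⟨hae, hal, hal0⟩

/-- The polynomial generators: `C p * g ^ 2` with `deg g ≤ m`. -/
def PolyGen (P : Set K) (m : ℕ) : Set K[X] :=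
  {y | ∃ p ∈ P, ∃ g : K[X], g.natDegree ≤ m ∧ y = C p * g ^ 2}

lemma goodPoly_of_mem_closure (hP : IsOrdering P) {m : ℕ} {q : K[X]}
    (hq : q ∈ AddSubmonoid.closure (PolyGen P m)) : GoodPoly P q := by
  induction hq using AddSubmonoid.closure_induction with
  | mem y hy =>
    obtain ⟨p, hp, g, _, rfl⟩ := hy
    intro hne
    have hp0 : p ≠ 0 := by rintro rfl; simp at hne
    have hg0 : g ≠ 0 := by rintro rfl; simp at hne
    constructor
    · rw [natDegree_mul (by simpa using hp0) (pow_ne_zero 2 hg0), natDegree_C,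
        natDegree_pow]
      exact ⟨g.natDegree, by ring⟩
    · rw [leadingCoeff_mul, leadingCoeff_C, leadingCoeff_pow]
      exact ⟨hP.2.1 _ hp _ (sq_mem hP _), mul_ne_zero hp0 (pow_ne_zero 2 (leadingCoeff_ne_zero.mpr hg0))⟩
  | zero => intro h; simp at h
  | add a b _ _ ha hb => exact goodPoly_add hP ha hb

lemma natDegree_le_of_mem_closure {m : ℕ} {q : K[X]}
    (hq : q ∈ AddSubmonoid.closure (PolyGen P m)) : q.natDegree ≤ 2 * m := by
  induction hq using AddSubmonoid.closure_induction with
  | mem y hy =>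
    obtain ⟨p, hp, g, hgm, rfl⟩ := hy
    calc (C p * g ^ 2).natDegree ≤ (C p).natDegree + (g ^ 2).natDegree := natDegree_mul_le
      _ ≤ 2 * m := by
          rw [natDegree_C, natDegree_pow]
          omega
  | zero => simp
  | add a b _ _ ha hb => exact le_trans (natDegree_add_le a b) (by omega)

lemma mk_mem_Tset_of_mem_closure {m : ℕ} {q : K[X]} (r : K[X])
    (hq : q ∈ AddSubmonoid.closure (PolyGen P m)) :
    AdjoinRoot.mk r q ∈ Tset P (AdjoinRoot r) := by
  induction hq using AddSubmonoid.closure_induction with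
  | mem y hy =>
    obtain ⟨p, hp, g, _, rfl⟩ := hy
    rw [map_mul, map_pow, AdjoinRoot.mk_C]
    exact AddSubmonoid.subset_closure ⟨p, hp, AdjoinRoot.mk r g, rfl⟩
  | zero => simpa using AddSubmonoid.zero_mem _
  | add a b _ _ ha hb => rw [map_add]; exact AddSubmonoid.add_mem _ ha hb

lemma exists_rep_of_mem_Tset {f : K[X]} (hf : f.Monic) (hdeg : 0 < f.natDegree)
    {x : AdjoinRoot f} (hx : x ∈ Tset P (AdjoinRoot f)) :
    ∃ q ∈ AddSubmonoid.closure (PolyGen P (f.natDegree - 1)), AdjoinRoot.mk f q = x := by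
  induction hx using AddSubmonoid.closure_induction with
  | mem y hy =>
    obtain ⟨p, hp, z, rfl⟩ := hy
    obtain ⟨g₀, rfl⟩ := AdjoinRoot.mk_surjective z
    set g := g₀ %ₘ f with hgdef
    have hmk : AdjoinRoot.mk f g = AdjoinRoot.mk f g₀ := by
      conv_rhs => rw [← modByMonic_add_div g₀ f]
      rw [map_add, map_mul, AdjoinRoot.mk_self, zero_mul, add_zero]
    have hgd : g.natDegree ≤ f.natDegree - 1 := by
      rcases eq_or_ne g 0 with h0 | h0
      · rw [h0]; simp
      · have := natDegree_lt_natDegree h0 (degree_modByMonic_lt g₀ hf)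
        omega
    refine ⟨C p * g ^ 2, AddSubmonoid.subset_closure ⟨p, hp, g, hgd, rfl⟩, ?_⟩
    rw [map_mul, map_pow, AdjoinRoot.mk_C, hmk]
    rfl
  | zero => exact ⟨0, AddSubmonoid.zero_mem _, by simp⟩
  | add a b _ _ ha hb =>
    obtain ⟨q₁, hq₁, rfl⟩ := ha
    obtain ⟨q₂, hq₂, rfl⟩ := hb
    exact ⟨q₁ + q₂, AddSubmonoid.add_mem _ hq₁ hq₂, by rw [map_add]⟩


lemma exists_odd_irreducible_factor (n : ℕ) :
    ∀ h : K[X], h.natDegree = n → h ≠ 0 → Odd n →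
    ∃ r : K[X], r.Monic ∧ Irreducible r ∧ Odd r.natDegree ∧ r.natDegree ≤ n ∧ r ∣ h := by
  classical
  induction n using Nat.strong_induction_on with
  | _ n ih =>
  intro h hdeg h0 hn
  obtain ⟨k, hk⟩ := hn
  have hnu : ¬IsUnit h := by
    intro hu
    have := Polynomial.natDegree_eq_zero_of_isUnit hu
    omega
  obtain ⟨r0, hr0irr, hr0dvd⟩ := WfDvdMonoid.exists_irreducible_factor hnu h0
  have hr00 : r0 ≠ 0 := hr0irr.ne_zero
  have hnatnorm : (normalize r0).natDegree = r0.natDegree :=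
    natDegree_eq_of_degree_eq degree_normalize
  by_cases hodd : Odd r0.natDegree
  · refine ⟨normalize r0, monic_normalize hr00, ?_, ?_, ?_, ?_⟩
    · exact (normalize_associated r0).symm.irreducible hr0irr
    · rwa [hnatnorm]
    · rw [hnatnorm, ← hdeg]
      exact natDegree_le_of_dvd hr0dvd h0
    · exact (normalize_associated r0).dvd.trans hr0dvd
  · obtain ⟨h₂, rfl⟩ := hr0dvd
    have hh₂0 : h₂ ≠ 0 := by rintro rfl; simp at h0
    have hdd : r0.natDegree + h₂.natDegree = n := by
      rw [← hdeg, natDegree_mul hr00 hh₂0]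
    have hr0pos : 0 < r0.natDegree := hr0irr.natDegree_pos
    have hodd₂ : Odd h₂.natDegree := by
      rcases Nat.even_or_odd h₂.natDegree with he | ho
      · exfalso
        have he2 : Even r0.natDegree := Nat.not_odd_iff_even.mp hodd
        obtain ⟨m, hm⟩ := hdd ▸ he2.add he
        omega
      · exact ho
    have hlt : h₂.natDegree < n := by omega
    obtain ⟨r, h1, h2, h3, h4, h5⟩ := ih h₂.natDegree hlt h₂ rfl hh₂0 hodd₂
    exact ⟨r, h1, h2, h3, by omega, h5.mul_left r0⟩

lemma key_lemma (hP : IsOrdering P) : ∀ n : ℕ, Odd n → ∀ f : K[X], f.Monic → Irreducible f →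
    f.natDegree = n → (-1 : AdjoinRoot f) ∉ Tset P (AdjoinRoot f) := by
  intro n
  induction n using Nat.strong_induction_on with
  | _ n ih =>
  intro hn f hf hirr hfd hmem
  have hn0 : 0 < n := hn.pos
  obtain ⟨q, hqmem, hqmk⟩ := exists_rep_of_mem_Tset hf (by omega) hmem
  rw [hfd] at hqmem
  set S := q + 1 with hSdef
  have hmkS : AdjoinRoot.mk f S = 0 := by rw [map_add, hqmk, map_one]; ring
  have hfS : f ∣ S := AdjoinRoot.mk_eq_zero.mp hmkS
  have hgoodq := goodPoly_of_mem_closure hP hqmem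
  have hgood1 : GoodPoly P (1 : K[X]) := fun _ => by
    simpa using one_mem hP
  have hgoodS := goodPoly_add hP hgoodq hgood1
  have hS0 : S ≠ 0 := by
    intro h0
    have hq1 : q = -1 := by
      have : q = S - 1 := by rw [hSdef]; ring
      rw [this, h0]; ring
    have hq0 : q ≠ 0 := by rw [hq1]; exact neg_ne_zero.mpr one_ne_zero
    have hlc := (hgoodq hq0).2.1
    rw [hq1] at hlc
    have : (-1 : K[X]).leadingCoeff = (-1 : K) := by
      rw [← map_one (C : K →+* K[X]), ← map_neg, leadingCoeff_C]
    rw [this] at hlc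
    exact neg_one_not_mem hP hlc
  obtain ⟨hSe, hSl, _⟩ := hgoodS hS0
  have hdq : q.natDegree ≤ 2 * (n - 1) := natDegree_le_of_mem_closure hqmem
  have hdS : S.natDegree ≤ 2 * (n - 1) := by
    refine le_trans (natDegree_add_le q 1) ?_
    simpa using hdq
  obtain ⟨h, hSfh⟩ := hfS
  have hh0 : h ≠ 0 := by
    rintro rfl
    rw [mul_zero] at hSfh
    exact hS0 hSfh
  have hdeg_eq : S.natDegree = n + h.natDegree := by
    rw [hSfh, natDegree_mul hf.ne_zero hh0, hfd]
  have hodd_h : Odd h.natDegree := by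
    have he : Even (n + h.natDegree) := hdeg_eq ▸ hSe
    rw [Nat.even_add] at he
    exact Nat.not_even_iff_odd.mp fun hE => (Nat.not_even_iff_odd.mpr hn) (he.mpr hE)
  have hhlt : h.natDegree < n := by omega
  obtain ⟨r, hrm, hrirr, hrodd, hrle, hrdvd⟩ :=
    exists_odd_irreducible_factor h.natDegree h rfl hh0 hodd_h
  have hrn : r.natDegree < n := lt_of_le_of_lt hrle hhlt
  apply ih r.natDegree hrn hrodd r hrm hrirr rfl
  have hrS : r ∣ S := hrdvd.trans ⟨f, by rw [hSfh]; ring⟩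
  have hmkq : AdjoinRoot.mk r q = -1 := by
    have h1 : AdjoinRoot.mk r S = 0 := AdjoinRoot.mk_eq_zero.mpr hrS
    have h2 : AdjoinRoot.mk r q + 1 = 0 := by
      rw [← map_one (AdjoinRoot.mk r), ← map_add, h1]
    linear_combination h2
  rw [← hmkq]
  exact mk_mem_Tset_of_mem_closure r hqmem


lemma nat_pos_mem (hP : IsOrdering P) : ∀ m : ℕ, m ≠ 0 → (m : K) ∈ P ∧ (m : K) ≠ 0 := by
  intro m
  induction m with
  | zero => intro h; exact absurd rfl h
  | succ k ih =>
    intro _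
    rcases eq_or_ne k 0 with rfl | hk0
    · refine ⟨by simpa using one_mem hP, by simp⟩
    · obtain ⟨h1, h2⟩ := ih hk0
      push_cast
      exact add_pos hP h1 h2 (one_mem hP)

lemma charZero_of_isOrdering (hP : IsOrdering P) : CharZero K := by
  apply charZero_of_inj_zero
  intro n hn
  by_contra h0
  exact (nat_pos_mem hP n h0).2 hn

lemma neg_one_not_mem_Tset {L : Type*} [Field L] [Algebra K L] (hP : IsOrdering P)
    (hodd : Odd (Module.finrank K L)) : (-1 : L) ∉ Tset P L := by
  intro hmem
  haveI := charZero_of_isOrdering hP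
  have h0 : 0 < Module.finrank K L := hodd.pos
  haveI : FiniteDimensional K L := FiniteDimensional.of_finrank_pos h0
  obtain ⟨α, hα⟩ := Field.exists_primitive_element K L
  have hint : IsIntegral K α := IsIntegral.of_finite K α
  have hfd : (minpoly K α).natDegree = Module.finrank K L := by
    have h1 := IntermediateField.adjoin.finrank hint
    rw [hα] at h1
    have h2 : Module.finrank K (⊤ : IntermediateField K L) = Module.finrank K L :=
      (IntermediateField.topEquiv (F := K) (E := L)).toLinearEquiv.finrank_eq
    rw [← h1, h2]
  have e : AdjoinRoot (minpoly K α) ≃ₐ[K] K⟮α⟯ :=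
    IntermediateField.adjoinRootEquivAdjoin K hint
  have e2 : K⟮α⟯ ≃ₐ[K] L := (IntermediateField.equivOfEq hα).trans IntermediateField.topEquiv
  have ψ : L ≃ₐ[K] AdjoinRoot (minpoly K α) := (e.trans e2).symm
  apply key_lemma hP _ hodd (minpoly K α) (minpoly.monic hint) (minpoly.irreducible hint) hfd
  have := Tset_map (P := P) ψ.toAlgHom.toRingHom (fun a => ψ.commutes a) hmem
  simpa using this

end ArtinSchreierAux

end Aux

open ArtinSchreierAux in
/-- If `L|K` is a field extension of odd degree, every ordering of `K` extends to `L`. -/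
theorem stmt4 {K L : Type*} [Field K] [Field L] [Algebra K L]
    (hodd : Odd (Module.finrank K L)) (P : Set K) (hP : IsOrdering P) :
    ∃ Q : Set L, IsOrdering Q ∧ ∀ a ∈ P, algebraMap K L a ∈ Q := by
  classical
  have hT : (-1 : L) ∉ Tset P L := neg_one_not_mem_Tset hP hodd
  set S : Set (Set L) := {Q | (∀ a ∈ Q, ∀ b ∈ Q, a + b ∈ Q) ∧ (∀ a ∈ Q, ∀ b ∈ Q, a * b ∈ Q) ∧
      (∀ x : L, x ^ 2 ∈ Q) ∧ (-1 : L) ∉ Q ∧ (Tset P L : Set L) ⊆ Q} with hSdef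
  have hTS : (Tset P L : Set L) ∈ S :=
    ⟨fun a ha b hb => AddSubmonoid.add_mem _ ha hb,
      fun a ha b hb => Tset_mul hP ha hb, sq_mem_Tset hP, hT, subset_rfl⟩
  have hchain : ∀ c ⊆ S, IsChain (· ⊆ ·) c → c.Nonempty →
      ∃ ub ∈ S, ∀ s ∈ c, s ⊆ ub := by
    intro c hc hch hne
    refine ⟨⋃₀ c, ⟨?_, ?_, ?_, ?_, ?_⟩, fun s hs => Set.subset_sUnion_of_mem hs⟩
    · rintro a ⟨Q₁, hQ₁, ha⟩ b ⟨Q₂, hQ₂, hb⟩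
      rcases hch.total hQ₁ hQ₂ with h | h
      · exact ⟨Q₂, hQ₂, (hc hQ₂).1 a (h ha) b hb⟩
      · exact ⟨Q₁, hQ₁, (hc hQ₁).1 a ha b (h hb)⟩
    · rintro a ⟨Q₁, hQ₁, ha⟩ b ⟨Q₂, hQ₂, hb⟩
      rcases hch.total hQ₁ hQ₂ with h | h
      · exact ⟨Q₂, hQ₂, (hc hQ₂).2.1 a (h ha) b hb⟩
      · exact ⟨Q₁, hQ₁, (hc hQ₁).2.1 a ha b (h hb)⟩
    · obtain ⟨Q₀, hQ₀⟩ := hne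
      intro x
      exact ⟨Q₀, hQ₀, (hc hQ₀).2.2.1 x⟩
    · rintro ⟨Q₁, hQ₁, h1⟩
      exact (hc hQ₁).2.2.2.1 h1
    · obtain ⟨Q₀, hQ₀⟩ := hne
      exact (hc hQ₀).2.2.2.2.trans (Set.subset_sUnion_of_mem hQ₀)
  obtain ⟨Q, hTQ, hQmax⟩ := zorn_subset_nonempty S hchain _ hTS
  obtain ⟨hQadd, hQmul, hQsq, hQne, hQT⟩ := hQmax.prop
  have h0Q : (0 : L) ∈ Q := by simpa using hQsq 0
  have h1Q : (1 : L) ∈ Q := by simpa using hQsq 1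
  have htotal : ∀ a : L, a ∈ Q ∨ -a ∈ Q := by
    intro a
    by_cases haQ : a ∈ Q
    · exact Or.inl haQ
    right
    set Q' : Set L := {z | ∃ x ∈ Q, ∃ y ∈ Q, z = x + y * (-a)} with hQ'def
    have hQQ' : Q ⊆ Q' := fun x hx => ⟨x, hx, 0, h0Q, by ring⟩
    have hQ'S : Q' ∈ S := by
      refine ⟨?_, ?_, fun x => hQQ' (hQsq x), ?_, hQT.trans hQQ'⟩
      · rintro _ ⟨x, hx, y, hy, rfl⟩ _ ⟨u, hu, v, hv, rfl⟩
        exact ⟨x + u, hQadd _ hx _ hu, y + v, hQadd _ hy _ hv, by ring⟩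
      · rintro _ ⟨x, hx, y, hy, rfl⟩ _ ⟨u, hu, v, hv, rfl⟩
        refine ⟨x * u + (y * v) * a ^ 2, ?_, x * v + y * u, ?_, by ring⟩
        · exact hQadd _ (hQmul _ hx _ hu) _ (hQmul _ (hQmul _ hy _ hv) _ (hQsq a))
        · exact hQadd _ (hQmul _ hx _ hv) _ (hQmul _ hy _ hu)
      · rintro ⟨x, hx, y, hy, heq⟩
        by_cases hy0 : y = 0
        · rw [hy0, zero_mul, add_zero] at heq
          exact hQne (heq ▸ hx)
        · apply haQ
          have hya : y * a = 1 + x := by linear_combination heq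
          have ha' : a = (1 + x) * y * (y⁻¹) ^ 2 := by
            rw [← hya]
            field_simp
          rw [ha']
          exact hQmul _ (hQmul _ (hQadd _ h1Q _ hx) _ hy) _ (hQsq _)
    have hEq : Q = Q' := hQmax.eq_of_subset hQ'S hQQ'
    have hmem : -a ∈ Q' := ⟨0, h0Q, 1, h1Q, by ring⟩
    rwa [hEq]
  have hsupp : ∀ a : L, a ∈ Q → -a ∈ Q → a = 0 := by
    intro a ha hna
    by_contra h0
    apply hQne
    have : (-1 : L) = a * (-a) * (a⁻¹) ^ 2 := by
      field_simp
    rw [this]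
    exact hQmul _ (hQmul _ ha _ hna) _ (hQsq _)
  refine ⟨Q, ⟨hQadd, hQmul, htotal, hsupp⟩, fun p hp => hQT ?_⟩
  exact AddSubmonoid.subset_closure ⟨p, hp, 1, by simp⟩
end

section
/- Let R be a real closed field and f ∈ R[X] a real-rooted polynomial (all roots of f in R(i) lie in R). Then the number of positive roots of f counted with multiplicity equals exactly the number of sign changes in the coefficients of f. -/
/-- A (linearly ordered) field is real closed if every nonnegative element is a
square and every polynomial of odd degree has a root. -/
def IsRealClosed' (R : Type*) [Field R] [LinearOrder R] [IsStrictOrderedRing R] : Prop :=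
  (∀ x : R, 0 ≤ x → ∃ y : R, y ^ 2 = x) ∧
    ∀ f : Polynomial R, Odd f.natDegree → ∃ x : R, f.eval x = 0

/-- The number of positive roots of a polynomial, counted with multiplicity. -/
noncomputable def posRootMult {R : Type*} [Field R] [LinearOrder R] [IsStrictOrderedRing R]
    (f : Polynomial R) : ℕ :=
  Multiset.card (f.roots.filter fun a => 0 < a)

/-- The number of sign changes in the sequence of nonzero coefficients of a
polynomial, ordered by increasing degree. -/
noncomputable def signChanges {R : Type*} [Field R] [LinearOrder R] [IsStrictOrderedRing R]
    (f : Polynomial R) : ℕ :=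
  let c : List R := (f.support.sort (· ≤ ·)).map f.coeff
  (c.zip c.tail).countP fun p => decide (SignType.sign p.1 ≠ SignType.sign p.2)

open Polynomial List

section Descartes

variable {R : Type*} [Field R] [LinearOrder R] [IsStrictOrderedRing R]

/-- recursive sign-change counter -/
private def chg {R : Type*} [Field R] [LinearOrder R] [IsStrictOrderedRing R] : List R → ℕ
  | a :: b :: l => (if SignType.sign a ≠ SignType.sign b then 1 else 0) + chg (b :: l)
  | _ => 0

private lemma chg_zip : ∀ l : List R,
    (l.zip l.tail).countP (fun p => decide (SignType.sign p.1 ≠ SignType.sign p.2)) = chg l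
  | [] => rfl
  | [a] => rfl
  | a :: b :: l => by
    rw [show (a::b::l).tail = b::l from rfl, List.zip_cons_cons, List.countP_cons, chg]
    rw [show (b::l).zip l = (b::l).zip ((b::l).tail) from rfl, chg_zip (b::l)]
    by_cases h : SignType.sign a = SignType.sign b <;> simp [h, Nat.add_comm]

private lemma chg_cons_le (a : R) : ∀ l : List R, chg l ≤ chg (a :: l)
  | [] => Nat.zero_le _
  | _ :: _ => Nat.le_add_left _ _

private lemma ind_triangle (a b c : R) :
    (if SignType.sign a ≠ SignType.sign c then 1 else 0) ≤
      (if SignType.sign a ≠ SignType.sign b then 1 else 0) +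
      (if SignType.sign b ≠ SignType.sign c then 1 else 0) := by
  by_cases h1 : SignType.sign a = SignType.sign b <;>
    by_cases h2 : SignType.sign b = SignType.sign c <;>
    simp [h1, h2] <;> split <;> omega

private lemma chg_sublist : ∀ {s t : List R}, s.Sublist t →
    chg s ≤ chg t ∧ ∀ a : R, chg (a :: s) ≤ chg (a :: t) := by
  intro s t h
  induction h with
  | slnil => exact ⟨le_refl _, fun a => le_refl _⟩
  | @cons l₁ l₂ b h ih =>
    refine ⟨ih.1.trans (chg_cons_le b l₂), fun a => ?_⟩
    have hstep : chg (a :: b :: l₂)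
        = (if SignType.sign a ≠ SignType.sign b then 1 else 0) + chg (b :: l₂) := rfl
    rw [hstep]
    cases l₁ with
      | nil => simp [chg]
      | cons x l =>
        have h1 : chg (a :: x :: l) = (if SignType.sign a ≠ SignType.sign x then 1 else 0) + chg (x :: l) := rfl
        have h2 : chg (b :: x :: l) = (if SignType.sign b ≠ SignType.sign x then 1 else 0) + chg (x :: l) := rfl
        have := ih.2 b
        have := ind_triangle a b x
        omega
  | @cons_cons l₁ l₂ x h ih =>
    refine ⟨ih.2 x, fun a => ?_⟩
    have h1 : chg (a :: x :: l₁) = (if SignType.sign a ≠ SignType.sign x then 1 else 0) + chg (x :: l₁) := rfl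
    have h2 : chg (a :: x :: l₂) = (if SignType.sign a ≠ SignType.sign x then 1 else 0) + chg (x :: l₂) := rfl
    have := ih.2 x
    omega

/-- alternating list has length = chg + 1 -/
private lemma chg_alt : ∀ {l : List R}, l ≠ [] →
    l.IsChain (fun x y => SignType.sign x ≠ SignType.sign y) → chg l + 1 = l.length
  | [], h, _ => absurd rfl h
  | [a], _, _ => rfl
  | a :: b :: l, _, hc => by
    rw [List.isChain_cons_cons] at hc
    have := chg_alt (l := b :: l) (by simp) hc.2
    show (if SignType.sign a ≠ SignType.sign b then 1 else 0) + chg (b::l) + 1 = _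
    rw [if_pos hc.1]
    simp only [List.length_cons] at *
    omega

/-- extract a maximal alternating sublist -/
private lemma exists_alt_sublist : ∀ {l : List R}, l ≠ [] →
    ∃ s : List R, s.Sublist l ∧ s ≠ [] ∧
      s.IsChain (fun x y => SignType.sign x ≠ SignType.sign y) ∧
      s.length = chg l + 1 ∧ s.head? = l.head?
  | [], h => absurd rfl h
  | [a], _ => ⟨[a], by simp, by simp, by simp, rfl, rfl⟩
  | a :: b :: l, _ => by
    obtain ⟨s, hsub, hne, halt, hlen, hhead⟩ := exists_alt_sublist (l := b :: l) (by simp)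
    obtain ⟨s', rfl⟩ : ∃ s', s = b :: s' := by
      cases s with
      | nil => exact absurd rfl hne
      | cons x s' => cases hhead; exact ⟨s', rfl⟩
    by_cases h : SignType.sign a = SignType.sign b
    · refine ⟨a :: s', ((hsub.of_cons_cons).cons b).cons_cons a, by simp, ?_, ?_, rfl⟩
      · cases s' with
        | nil => simp
        | cons y t =>
          rw [List.isChain_cons_cons] at halt ⊢
          exact ⟨h ▸ halt.1, halt.2⟩
      · have : chg (a :: b :: l) = chg (b :: l) := by
          show (if _ ≠ _ then 1 else 0) + _ = _
          simp [h]
        simp at hlen ⊢; omega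
    · refine ⟨a :: b :: s', hsub.cons_cons a, by simp, ?_, ?_, rfl⟩
      · rw [List.isChain_cons_cons]; exact ⟨h, halt⟩
      · have : chg (a :: b :: l) = 1 + chg (b :: l) := by
          show (if _ ≠ _ then 1 else 0) + _ = _
          simp [h]
        simp at hlen ⊢; omega

private lemma sorted_eq_filter_range {s : Finset ℕ} {N : ℕ} (h : ∀ i ∈ s, i < N) :
    s.sort (· ≤ ·) = (List.range N).filter (fun i => decide (i ∈ s)) := by
  refine (fun h1 h2 h3 => List.Perm.eq_of_pairwise' (r := (· ≤ ·)) h2 h3 h1) ?_ ?_ ?_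
  · rw [List.perm_ext_iff_of_nodup (Finset.sort_nodup _ _) (((List.nodup_range (n := N))).filter _)]
    intro a
    simp only [Finset.mem_sort, List.mem_filter, List.mem_range, decide_eq_true_eq]
    exact ⟨fun ha => ⟨h a ha, ha⟩, fun ha => ha.2⟩
  · exact Finset.pairwise_sort _ _
  · exact ((List.pairwise_lt_range (n := N)).imp le_of_lt).sublist (List.filter_sublist)

private lemma sublist_range_of_chain {Q : List ℕ} (hc : Q.IsChain (· < ·)) {N : ℕ}
    (hN : ∀ q ∈ Q, q < N) : Q.Sublist (List.range N) := by
  have hp : Q.Pairwise (· < ·) := List.isChain_iff_pairwise.mp hc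
  have : Q = (List.range N).filter (fun i => decide (i ∈ Q)) := by
    refine (fun h1 h2 h3 => List.Perm.eq_of_pairwise' (r := (· ≤ ·)) h2 h3 h1) ?_ ?_ ?_
    · rw [List.perm_ext_iff_of_nodup hp.nodup (((List.nodup_range (n := N))).filter _)]
      intro a
      simp only [List.mem_filter, List.mem_range, decide_eq_true_eq]
      exact ⟨fun ha => ⟨hN a ha, ha⟩, fun ha => ha.2⟩
    · exact hp.imp le_of_lt
    · exact ((List.pairwise_lt_range (n := N)).imp le_of_lt).sublist (List.filter_sublist)
  rw [this]
  exact List.filter_sublist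

private lemma map_filter_coeff (f : ℕ → R) : ∀ l : List ℕ,
    (l.filter (fun i => decide (f i ≠ 0))).map f = (l.map f).filter (fun x => decide (x ≠ 0))
  | [] => rfl
  | i :: l => by
    have ih := map_filter_coeff f l
    by_cases h : f i = 0 <;> simp [List.filter_cons, h] <;> simpa using ih

private lemma signChanges_eq_chg (f : Polynomial R) {N : ℕ} (hN : f.natDegree < N) :
    signChanges f = chg (((List.range N).map f.coeff).filter (fun x => decide (x ≠ 0))) := by
  show ((_ : List R).zip _).countP _ = _
  rw [chg_zip]
  congr 1
  rw [sorted_eq_filter_range (fun i hi => lt_of_le_of_lt (Polynomial.le_natDegree_of_mem_supp i hi) hN),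
    ← map_filter_coeff]
  congr 1
  apply List.filter_congr
  intro i _
  simp [Polynomial.mem_support_iff]

variable {b c : ℕ → R} {a : R}

private lemma prefix_sum (h0 : c 0 = -(a * b 0))
    (hrec : ∀ i, c (i+1) = b i - a * b (i+1)) :
    ∀ q, ∑ i ∈ Finset.range (q+1), a^i * c i = -(a^(q+1) * b q)
  | 0 => by simp [h0]
  | q+1 => by
    rw [Finset.sum_range_succ, prefix_sum h0 hrec q, hrec q]; ring

private lemma ioc_sum (h0 : c 0 = -(a * b 0))
    (hrec : ∀ i, c (i+1) = b i - a * b (i+1)) (p : ℕ) :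
    ∀ q, p ≤ q → ∑ i ∈ Finset.Ioc p q, a^i * c i = a^(p+1) * b p - a^(q+1) * b q := by
  intro q
  induction q with
  | zero =>
    intro hq
    have : p = 0 := Nat.le_zero.mp hq
    subst this
    simp
  | succ q ih =>
    intro hq
    rcases Nat.lt_succ_iff_lt_or_eq.mp (Nat.lt_succ_of_le hq) with h | rfl
    · have hpq : p ≤ q := Nat.lt_succ_iff.mp h
      rw [Finset.sum_Ioc_succ_top hpq, ih hpq, hrec q]; ring
    · simp

private lemma opp_sign_mul_nonpos {x y : R} (hx : x ≠ 0)
    (h : SignType.sign x ≠ SignType.sign y) : x * y ≤ 0 := by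
  rcases hx.lt_or_gt with hx' | hx' <;> rcases lt_trichotomy y 0 with hy | rfl | hy
  · exact absurd (by rw [sign_neg hx', sign_neg hy]) h
  · simp
  · exact le_of_lt (mul_neg_of_neg_of_pos hx' hy)
  · exact le_of_lt (mul_neg_of_pos_of_neg hx' hy)
  · simp
  · exact absurd (by rw [sign_pos hx', sign_pos hy]) h

private lemma exists_pos_of_sum_pos {s : Finset ℕ} {w : ℕ → R}
    (hw : ∀ i ∈ s, 0 < w i) (h : 0 < ∑ i ∈ s, w i * c i) : ∃ i ∈ s, 0 < c i := by
  by_contra hcon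
  push_neg at hcon
  have : ∑ i ∈ s, w i * c i ≤ 0 :=
    Finset.sum_nonpos fun i hi => mul_nonpos_of_nonneg_of_nonpos (hw i hi).le (hcon i hi)
  linarith

private lemma window_find (ha : 0 < a) (h0 : c 0 = -(a * b 0))
    (hrec : ∀ i, c (i+1) = b i - a * b (i+1)) {p q : ℕ} (hpq : p < q)
    (hbp : b p ≠ 0) (hbq : b p * b q ≤ 0) :
    ∃ i, p < i ∧ i ≤ q ∧ SignType.sign (c i) = SignType.sign (b p) := by
  have hsum := ioc_sum h0 hrec p q hpq.le
  have hwpos : ∀ i ∈ Finset.Ioc p q, (0:R) < a ^ i := fun i _ => pow_pos ha i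
  rcases hbp.lt_or_gt with hneg | hpos
  · have hq : 0 ≤ b q := by nlinarith
    have hlt : ∑ i ∈ Finset.Ioc p q, a^i * c i < 0 := by
      rw [hsum]
      have := pow_pos ha (p+1); have := pow_pos ha (q+1)
      nlinarith
    have : ∃ i ∈ Finset.Ioc p q, 0 < -c i := by
      apply exists_pos_of_sum_pos hwpos (c := fun i => -(c i))
      rw [← neg_pos] at hlt
      calc (0:R) < -∑ i ∈ Finset.Ioc p q, a^i * c i := hlt
        _ = ∑ i ∈ Finset.Ioc p q, a^i * -(c i) := by rw [← Finset.sum_neg_distrib]; exact Finset.sum_congr rfl fun i _ => by ring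
    obtain ⟨i, hi, hci⟩ := this
    rw [Finset.mem_Ioc] at hi
    exact ⟨i, hi.1, hi.2, by rw [sign_neg (by linarith), sign_neg hneg]⟩
  · have hq : b q ≤ 0 := by nlinarith
    have hlt : 0 < ∑ i ∈ Finset.Ioc p q, a^i * c i := by
      rw [hsum]
      have := pow_pos ha (p+1); have := pow_pos ha (q+1)
      nlinarith
    obtain ⟨i, hi, hci⟩ := exists_pos_of_sum_pos hwpos hlt
    rw [Finset.mem_Ioc] at hi
    exact ⟨i, hi.1, hi.2, by rw [sign_pos hci, sign_pos hpos]⟩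

private lemma window_find0 (ha : 0 < a) (h0 : c 0 = -(a * b 0))
    (hrec : ∀ i, c (i+1) = b i - a * b (i+1)) {j : ℕ} (hbj : b j ≠ 0) :
    ∃ i, i ≤ j ∧ SignType.sign (c i) = -SignType.sign (b j) := by
  have hsum := prefix_sum h0 hrec j
  have hwpos : ∀ i ∈ Finset.range (j+1), (0:R) < a ^ i := fun i _ => pow_pos ha i
  rcases hbj.lt_or_gt with hneg | hpos
  · have hlt : 0 < ∑ i ∈ Finset.range (j+1), a^i * c i := by
      rw [hsum]
      have := pow_pos ha (j+1)
      nlinarith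
    obtain ⟨i, hi, hci⟩ := exists_pos_of_sum_pos hwpos hlt
    rw [Finset.mem_range, Nat.lt_succ_iff] at hi
    exact ⟨i, hi, by rw [sign_pos hci, sign_neg hneg]; rfl⟩
  · have hlt : ∑ i ∈ Finset.range (j+1), a^i * c i < 0 := by
      rw [hsum]
      have := pow_pos ha (j+1)
      nlinarith
    have : ∃ i ∈ Finset.range (j+1), 0 < -c i := by
      apply exists_pos_of_sum_pos hwpos (c := fun i => -(c i))
      rw [← neg_pos] at hlt
      calc (0:R) < -∑ i ∈ Finset.range (j+1), a^i * c i := hlt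
        _ = ∑ i ∈ Finset.range (j+1), a^i * -(c i) := by rw [← Finset.sum_neg_distrib]; exact Finset.sum_congr rfl fun i _ => by ring
    obtain ⟨i, hi, hci⟩ := this
    rw [Finset.mem_range, Nat.lt_succ_iff] at hi
    exact ⟨i, hi, by rw [sign_neg (by linarith), sign_pos hpos]⟩

private lemma sign_ne_zero_of_ne {x : R} (hx : x ≠ 0) : SignType.sign x ≠ 0 :=
  fun h => hx (sign_eq_zero_iff.mp h)

private lemma build_chain (ha : 0 < a) (h0 : c 0 = -(a * b 0))
    (hrec : ∀ i, c (i+1) = b i - a * b (i+1)) {M : ℕ} (hbM : b M = 0) :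
    ∀ (J : List ℕ) (j : ℕ), (j :: J).IsChain (· < ·) → (∀ x ∈ j :: J, b x ≠ 0) →
      (j :: J).IsChain (fun x y => SignType.sign (b x) ≠ SignType.sign (b y)) →
      (∀ x ∈ j :: J, x < M) →
      ∃ (q : ℕ) (Q : List ℕ), (q :: Q).IsChain (· < ·) ∧ (∀ x ∈ q :: Q, j < x ∧ x ≤ M) ∧
        (q :: Q).length = J.length + 1 ∧
        (q :: Q).IsChain (fun x y => SignType.sign (c x) ≠ SignType.sign (c y)) ∧
        (∀ x ∈ q :: Q, c x ≠ 0) ∧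
        SignType.sign (c q) = SignType.sign (b j)
  | [], j, _, hb, _, hM => by
    have hbj : b j ≠ 0 := hb j (by simp)
    obtain ⟨i, hij, hiM, hsgn⟩ := window_find ha h0 hrec (hM j (by simp)) hbj
      (by rw [hbM, mul_zero])
    refine ⟨i, [], by simp, by simp [hij, hiM], rfl, by simp, ?_, hsgn⟩
    intro x hx
    simp only [List.mem_singleton] at hx
    subst hx
    intro hc0
    rw [hc0] at hsgn
    exact sign_ne_zero_of_ne hbj (by simp [← hsgn])
  | j' :: J, j, hchain, hb, halt, hM => by
    have hchain' := (List.isChain_cons_cons.mp hchain).2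
    have halt' := (List.isChain_cons_cons.mp halt).2
    obtain ⟨q', Q', hQchain, hQmem, hQlen, hQalt, hQne, hQsgn⟩ :=
      build_chain ha h0 hrec hbM (J) j' hchain' (fun x hx => hb x (List.mem_cons_of_mem _ hx))
        halt' (fun x hx => hM x (List.mem_cons_of_mem _ hx))
    have hbj : b j ≠ 0 := hb j (by simp)
    have hbj' : b j' ≠ 0 := hb j' (by simp)
    have hjj' : j < j' := (List.isChain_cons_cons.mp hchain).1
    have hsgn_ne : SignType.sign (b j) ≠ SignType.sign (b j') := (List.isChain_cons_cons.mp halt).1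
    obtain ⟨q, hjq, hqj', hsgn⟩ := window_find ha h0 hrec hjj' hbj
      (opp_sign_mul_nonpos hbj hsgn_ne)
    refine ⟨q, q' :: Q', ?_, ?_, by simpa using hQlen, ?_, ?_, hsgn⟩
    · rw [List.isChain_cons_cons]
      exact ⟨lt_of_le_of_lt hqj' (hQmem q' (by simp)).1, hQchain⟩
    · intro x hx
      rcases List.mem_cons.mp hx with rfl | hx
      · exact ⟨hjq, le_trans (le_trans hqj' (hQmem q' (by simp)).1.le) (hQmem q' (by simp)).2⟩
      · exact ⟨lt_trans hjj' (hQmem x hx).1, (hQmem x hx).2⟩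
    · rw [List.isChain_cons_cons]
      refine ⟨?_, hQalt⟩
      rw [hsgn, hQsgn]
      exact hsgn_ne
    · intro x hx
      rcases List.mem_cons.mp hx with rfl | hx
      · intro hc0
        rw [hc0] at hsgn
        exact sign_ne_zero_of_ne hbj (by simp [← hsgn])
      · exact hQne x hx

private lemma signType_neg_ne_self {s : SignType} (hs : s ≠ 0) : -s ≠ s := by
  cases s <;> simp_all <;> decide

private lemma signChanges_mul_X_sub_C (g : Polynomial R) (hg : g ≠ 0) {a : R} (ha : 0 < a) :
    signChanges g + 1 ≤ signChanges (g * (X - C a)) := by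
  set h : Polynomial R := g * (X - C a) with hh_def
  have hXa : (X - C a : Polynomial R) ≠ 0 := X_sub_C_ne_zero a
  have hh : h ≠ 0 := mul_ne_zero hg hXa
  have hdegh : h.natDegree = g.natDegree + 1 := by
    rw [hh_def, natDegree_mul hg hXa, natDegree_X_sub_C]
  -- coefficient recurrences
  have h0 : h.coeff 0 = -(a * g.coeff 0) := by
    rw [coeff_zero_eq_eval_zero]
    simp [hh_def, coeff_zero_eq_eval_zero]
    ring
  have hrec : ∀ i, h.coeff (i+1) = g.coeff i - a * g.coeff (i+1) := by
    intro i
    rw [hh_def, Polynomial.coeff_mul_X_sub_C]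
    ring
  -- alternating chain of coefficients of g
  set N := g.natDegree + 1 with hN_def
  set L := ((List.range N).map g.coeff).filter (fun x => decide (x ≠ 0)) with hL_def
  have hVg : signChanges g = chg L := signChanges_eq_chg g (Nat.lt_succ_self _)
  have hLne : L ≠ [] := by
    have hmem : g.coeff g.natDegree ∈ L := by
      rw [hL_def]
      refine List.mem_filter.mpr ⟨List.mem_map.mpr ⟨g.natDegree, ?_, rfl⟩, by
        simpa using (mt Polynomial.leadingCoeff_eq_zero.mp hg)⟩
      exact List.mem_range.mpr (Nat.lt_succ_self _)
    exact List.ne_nil_of_mem hmem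
  obtain ⟨s, hsub, hne, halt, hlen, -⟩ := exists_alt_sublist hLne
  have hsub2 : s.Sublist ((List.range N).map g.coeff) := hsub.trans (List.filter_sublist)
  obtain ⟨J, hJsub, rfl⟩ := List.sublist_map_iff.mp hsub2
  have hJchain : J.IsChain (· < ·) :=
    List.isChain_iff_pairwise.mpr (List.Pairwise.sublist hJsub (List.pairwise_lt_range (n := N)))
  have hJne0 : ∀ x ∈ J, g.coeff x ≠ 0 := by
    intro x hx
    have : g.coeff x ∈ List.map g.coeff J := List.mem_map.mpr ⟨x, hx, rfl⟩
    have := (List.mem_filter.mp (hsub.subset this)).2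
    simpa using this
  have hJalt : J.IsChain (fun x y => SignType.sign (g.coeff x) ≠ SignType.sign (g.coeff y)) :=
    (List.isChain_map g.coeff).mp halt
  have hJM : ∀ x ∈ J, x < N := fun x hx => List.mem_range.mp (hJsub.subset hx)
  have hbM : g.coeff N = 0 := Polynomial.coeff_eq_zero_of_natDegree_lt (Nat.lt_succ_self _)
  obtain ⟨j, J', rfl⟩ : ∃ j J', J = j :: J' := by
    cases J with
    | nil => simp at hne
    | cons j J' => exact ⟨j, J', rfl⟩
  obtain ⟨q, Q, hQchain, hQmem, hQlen, hQalt, hQne, hQsgn⟩ :=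
    build_chain (b := g.coeff) (c := h.coeff) ha h0 hrec hbM J' j hJchain hJne0 hJalt hJM
  obtain ⟨q0, hq0j, hq0sgn⟩ := window_find0 (b := g.coeff) (c := h.coeff) ha h0 hrec
    (hJne0 j (by simp))
  -- assemble full chain
  have hq0ne : h.coeff q0 ≠ 0 := by
    intro hc0
    rw [hc0] at hq0sgn
    have h1 : SignType.sign (g.coeff j) = 0 := by
      have h2 : -SignType.sign (g.coeff j) = 0 := by simpa using hq0sgn.symm
      cases hsg : SignType.sign (g.coeff j) <;> rw [hsg] at h2 <;>
        first | rfl | exact absurd h2 (by decide)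
    exact sign_ne_zero_of_ne (hJne0 j (by simp)) h1
  set QQ := q0 :: q :: Q with hQQ_def
  have hQQchain : QQ.IsChain (· < ·) := by
    rw [hQQ_def, List.isChain_cons_cons]
    exact ⟨lt_of_le_of_lt hq0j (hQmem q (by simp)).1, hQchain⟩
  have hQQalt : QQ.IsChain (fun x y => SignType.sign (h.coeff x) ≠ SignType.sign (h.coeff y)) := by
    rw [hQQ_def, List.isChain_cons_cons]
    refine ⟨?_, hQalt⟩
    rw [hq0sgn, hQsgn]
    exact signType_neg_ne_self (sign_ne_zero_of_ne (hJne0 j (by simp)))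
  have hQQne : ∀ x ∈ QQ, h.coeff x ≠ 0 := by
    intro x hx
    rcases List.mem_cons.mp hx with rfl | hx
    · exact hq0ne
    · exact hQne x hx
  have hQQlt : ∀ x ∈ QQ, x < h.natDegree + 1 := by
    intro x hx
    rcases List.mem_cons.mp hx with rfl | hx
    · have := hJM j (by simp)
      omega
    · have := (hQmem x hx).2
      omega
  -- conclude
  have hVh : signChanges h = chg (((List.range (h.natDegree + 1)).map h.coeff).filter
      (fun x => decide (x ≠ 0))) := signChanges_eq_chg h (Nat.lt_succ_self _)
  have hsubQQ : (QQ.map h.coeff).Sublist ((List.range (h.natDegree + 1)).map h.coeff) :=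
    (sublist_range_of_chain hQQchain hQQlt).map h.coeff
  have hfilt : (QQ.map h.coeff).filter (fun x => decide (x ≠ 0)) = QQ.map h.coeff := by
    apply List.filter_eq_self.mpr
    intro x hx
    obtain ⟨i, hi, rfl⟩ := List.mem_map.mp hx
    simpa using hQQne i hi
  have hmono : chg (QQ.map h.coeff) ≤ signChanges h := by
    rw [hVh]
    have := (chg_sublist (hfilt ▸ (List.Sublist.filter _ hsubQQ))).1
    exact this
  have hcount : chg (QQ.map h.coeff) + 1 = QQ.length := by
    have : (QQ.map h.coeff).IsChain (fun x y => SignType.sign x ≠ SignType.sign y) :=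
      (List.isChain_map h.coeff).mpr hQQalt
    have := chg_alt (by simp [hQQ_def]) this
    simpa using this
  have hlen2 : QQ.length = signChanges g + 2 := by
    have : (List.map g.coeff (j :: J')).length = chg L + 1 := hlen
    simp only [List.length_map, List.length_cons] at this
    have h5 : Q.length = J'.length := by simpa using hQlen
    simp only [hQQ_def, List.length_cons, h5, hVg]
    omega
  have hfin : signChanges g + 1 ≤ chg (QQ.map h.coeff) := by omega
  exact hfin.trans hmono

private lemma posRoot_le : ∀ (n : ℕ) (f : Polynomial R), f.natDegree ≤ n → f ≠ 0 →
    posRootMult f ≤ signChanges f := by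
  intro n
  induction n with
  | zero =>
    intro f hdeg hf
    have : f.roots = 0 := by
      have := Polynomial.eq_C_of_natDegree_eq_zero (Nat.le_zero.mp hdeg)
      rw [this, Polynomial.roots_C]
    unfold posRootMult
    rw [this]
    simp
  | succ n ih =>
    intro f hdeg hf
    by_cases hpos : (f.roots.filter (fun a => 0 < a)) = 0
    · unfold posRootMult
      rw [hpos]
      simp
    · obtain ⟨a, ha⟩ := Multiset.exists_mem_of_ne_zero hpos
      rw [Multiset.mem_filter] at ha
      obtain ⟨haroot, hapos⟩ := ha
      have hroot : f.IsRoot a := Polynomial.isRoot_of_mem_roots haroot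
      obtain ⟨g, hg⟩ := Polynomial.dvd_iff_isRoot.mpr hroot
      have hg0 : g ≠ 0 := by
        intro h0
        rw [h0, mul_zero] at hg
        exact hf hg
      have hfg : f = g * (X - C a) := by rw [hg, mul_comm]
      have hdegf : f.natDegree = g.natDegree + 1 := by
        rw [hfg, Polynomial.natDegree_mul hg0 (X_sub_C_ne_zero a), natDegree_X_sub_C]
      have hroots : f.roots = a ::ₘ g.roots := by
        rw [hg, Polynomial.roots_mul (hg ▸ hf), Polynomial.roots_X_sub_C]
        rw [Multiset.singleton_add]
      have hcount : posRootMult f = posRootMult g + 1 := by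
        unfold posRootMult
        rw [hroots, Multiset.filter_cons_of_pos _ hapos]
        simp
      have hstep := signChanges_mul_X_sub_C g hg0 hapos
      rw [← hfg] at hstep
      have := ih g (by omega) hg0
      omega

private lemma coeff_comp_neg_X (f : Polynomial R) (n : ℕ) :
    (f.comp (-X)).coeff n = (-1)^n * f.coeff n := by
  induction f using Polynomial.induction_on' with
  | add p q hp hq => simp [add_comp, hp, hq, mul_add]
  | monomial m a =>
    rw [monomial_comp]
    rw [show ((-X : Polynomial R)) ^ m = C ((-1)^m) * X^m by
      rw [neg_pow]; simp [C_pow, map_pow]]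
    rw [← mul_assoc, ← C_mul, coeff_C_mul, coeff_X_pow, coeff_monomial]
    by_cases h : n = m
    · subst h; simp [mul_comm]
    · simp [h, Ne.symm h]

private lemma support_comp_neg_X (f : Polynomial R) :
    (f.comp (-X)).support = f.support := by
  ext n
  simp [Polynomial.mem_support_iff, coeff_comp_neg_X, pow_ne_zero]

private lemma comp_neg_X_ne_zero {f : Polynomial R} (hf : f ≠ 0) : f.comp (-X) ≠ 0 := by
  intro h
  apply hf
  rw [← Polynomial.support_eq_empty, ← support_comp_neg_X, h]
  simp

private lemma sign_neg_one_pow_mul (i : ℕ) (x : R) :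
    SignType.sign ((-1:R)^i * x) = if Even i then SignType.sign x else -SignType.sign x := by
  rcases Nat.even_or_odd i with h | h
  · rw [h.neg_one_pow, one_mul, if_pos h]
  · rw [h.neg_one_pow, if_neg (Nat.not_even_iff_odd.mpr h), neg_one_mul, Left.sign_neg]

private lemma st_cases {s t : SignType} (hs : s ≠ 0) (ht : t ≠ 0) :
    (s = t ∧ s ≠ -t ∧ -s ≠ t) ∨ (s ≠ t ∧ s = -t ∧ -s = t) := by
  cases s <;> cases t <;> simp_all <;> decide

private lemma pair_parity_bound {c : ℕ → R} {i i' : ℕ} (hlt : i < i') (hi : c i ≠ 0)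
    (hi' : c i' ≠ 0) :
    (if SignType.sign (c i) ≠ SignType.sign (c i') then 1 else 0)
    + (if SignType.sign ((-1:R)^i * c i) ≠ SignType.sign ((-1:R)^i' * c i') then 1 else 0)
      ≤ i' - i := by
  have hsi : SignType.sign (c i) ≠ 0 := fun h => hi (sign_eq_zero_iff.mp h)
  have hsi' : SignType.sign (c i') ≠ 0 := fun h => hi' (sign_eq_zero_iff.mp h)
  rw [sign_neg_one_pow_mul, sign_neg_one_pow_mul]
  have hst := st_cases hsi hsi'
  rcases Nat.even_or_odd i with he | ho <;> rcases Nat.even_or_odd i' with he' | ho'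
  · rw [if_pos he, if_pos he']
    rcases hst with ⟨h1, -, -⟩ | ⟨h1, -, -⟩
    · rw [if_neg (fun hh => hh h1)]
      omega
    · rw [if_pos h1]
      obtain ⟨m, rfl⟩ := he
      obtain ⟨m', rfl⟩ := he'
      omega
  · rw [if_pos he, if_neg (Nat.not_even_iff_odd.mpr ho')]
    rcases hst with ⟨h1, h2, -⟩ | ⟨h1, h2, -⟩
    · rw [if_neg (fun hh => hh h1), if_pos h2]
      omega
    · rw [if_pos h1, if_neg (fun hh => hh h2)]
      omega
  · rw [if_neg (Nat.not_even_iff_odd.mpr ho), if_pos he']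
    rcases hst with ⟨h1, -, h3⟩ | ⟨h1, -, h3⟩
    · rw [if_neg (fun hh => hh h1), if_pos h3]
      omega
    · rw [if_pos h1, if_neg (fun hh => hh h3)]
      omega
  · rw [if_neg (Nat.not_even_iff_odd.mpr ho), if_neg (Nat.not_even_iff_odd.mpr ho')]
    rcases hst with ⟨h1, -, -⟩ | ⟨h1, -, -⟩
    · rw [if_neg (fun hh => hh h1), if_neg (fun hh => hh (by rw [h1]))]
      omega
    · rw [if_pos h1, if_pos (fun hc => h1 (neg_inj.mp hc))]
      obtain ⟨m, rfl⟩ := ho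
      obtain ⟨m', rfl⟩ := ho'
      omega

private lemma chain_le_getLast : ∀ (t : List ℕ) (i : ℕ), (i :: t).IsChain (· < ·) →
    i ≤ ((i :: t).getLast?).getD 0
  | [], i, _ => le_refl i
  | x :: t, i, h => by
    have h1 := (List.isChain_cons_cons.mp h).1
    have h2 := chain_le_getLast t x (List.isChain_cons_cons.mp h).2
    rw [show (i :: x :: t).getLast? = (x :: t).getLast? from rfl]
    omega

private lemma chg_pair_bound (c : ℕ → R) : ∀ L : List ℕ, L.IsChain (· < ·) →
    (∀ i ∈ L, c i ≠ 0) →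
    chg (L.map c) + chg (L.map (fun i => (-1:R)^i * c i))
      ≤ (L.getLast?).getD 0 - (L.head?).getD 0
  | [], _, _ => by simp [chg]
  | [i], _, _ => by simp [chg]
  | i :: i' :: t, hchain, hne => by
    have hlt := (List.isChain_cons_cons.mp hchain).1
    have hch' := (List.isChain_cons_cons.mp hchain).2
    have ih := chg_pair_bound c (i' :: t) hch' (fun x hx => hne x (List.mem_cons_of_mem _ hx))
    have hpair := pair_parity_bound (c := c) hlt (hne i (by simp)) (hne i' (by simp))
    have e1 : chg ((i :: i' :: t).map c)
        = (if SignType.sign (c i) ≠ SignType.sign (c i') then 1 else 0)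
          + chg ((i' :: t).map c) := rfl
    have e2 : chg ((i :: i' :: t).map (fun i => (-1:R)^i * c i))
        = (if SignType.sign ((-1:R)^i * c i) ≠ SignType.sign ((-1:R)^i' * c i') then 1 else 0)
          + chg ((i' :: t).map (fun i => (-1:R)^i * c i)) := rfl
    have hlast : ((i :: i' :: t).getLast?).getD 0 = ((i' :: t).getLast?).getD 0 := rfl
    have hlastge := chain_le_getLast (i' :: t)  -- dummy
    have hge : i' ≤ ((i' :: t).getLast?).getD 0 := chain_le_getLast t i' hch'
    rw [e1, e2, hlast]
    simp only [List.head?_cons, Option.getD_some] at ih ⊢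
    omega

private lemma signChanges_eq_chg_sort (f : Polynomial R) :
    signChanges f = chg ((f.support.sort (· ≤ ·)).map f.coeff) := by
  show ((_ : List R).zip _).countP _ = _
  rw [chg_zip]

private lemma two_sided (f : Polynomial R) (hf : f ≠ 0) :
    signChanges f + signChanges (f.comp (-X)) ≤ f.natDegree - f.natTrailingDegree := by
  set L := f.support.sort (· ≤ ·) with hL
  have hLne : L ≠ [] := by
    intro h
    apply hf
    rw [← Polynomial.support_eq_empty]
    have := congrArg List.toFinset h
    rwa [hL, Finset.sort_toFinset, List.toFinset_nil] at this
  have hlen : 0 < L.length := List.length_pos_iff.mpr hLne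
  have h1 : signChanges f = chg (L.map f.coeff) := signChanges_eq_chg_sort f
  have h2 : signChanges (f.comp (-X)) = chg (L.map (fun i => (-1:R)^i * f.coeff i)) := by
    rw [signChanges_eq_chg_sort]
    rw [support_comp_neg_X]
    rw [← hL]
    congr 1
    exact List.map_congr_left (fun i _ => coeff_comp_neg_X f i)
  have hchain : L.IsChain (· < ·) :=
    List.isChain_iff_pairwise.mpr (Finset.sortedLT_sort _).pairwise
  have hne0 : ∀ i ∈ L, f.coeff i ≠ 0 := by
    intro i hi
    rw [hL, Finset.mem_sort] at hi
    exact Polynomial.mem_support_iff.mp hi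
  have hbound := chg_pair_bound f.coeff L hchain hne0
  have hhead : (L.head?).getD 0 = f.natTrailingDegree := by
    rw [List.head?_eq_head hLne, Option.getD_some, List.head_eq_getElem,
      Polynomial.natTrailingDegree_eq_support_min' hf]
    exact Finset.sorted_zero_eq_min' (h := hlen)
  have hlast : (L.getLast?).getD 0 = f.natDegree := by
    rw [List.getLast?_eq_getLast hLne, Option.getD_some, List.getLast_eq_getElem,
      Polynomial.natDegree_eq_support_max' hf]
    exact Finset.sorted_last_eq_max' (h := by rw [← hL]; omega)
  rw [h1, h2]
  rw [hhead, hlast] at hbound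
  exact hbound

private lemma roots_comp_neg_X {f : Polynomial R} (hf : f.Splits) (h0 : f ≠ 0) :
    (f.comp (-X)).roots = f.roots.map (fun x => -x) := by
  have hcard : Multiset.card f.roots = f.natDegree := Polynomial.splits_iff_card_roots.mp hf
  conv_lhs => rw [hf.eq_prod_roots]
  rw [Polynomial.mul_comp, Polynomial.C_comp, Polynomial.multiset_prod_comp]
  have e1 : Multiset.map (fun p : Polynomial R => p.comp (-X)) (f.roots.map fun a => X - C a)
      = f.roots.map (fun a => -(X - C (-a))) := by
    rw [Multiset.map_map]
    apply Multiset.map_congr rfl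
    intro a _
    simp only [Function.comp_apply, Polynomial.sub_comp, Polynomial.X_comp, Polynomial.C_comp]
    rw [Polynomial.C_neg]
    ring
  rw [e1]
  have e2 : (f.roots.map fun a => -(X - C (-a))).prod
      = (-1 : Polynomial R)^(Multiset.card f.roots) * (f.roots.map fun a => X - C (-a)).prod := by
    rw [show (fun a : R => -(X - C (-a))) = (fun p : Polynomial R => -p) ∘ (fun a : R => X - C (-a))
      from rfl, ← Multiset.map_map, Multiset.prod_map_neg, Multiset.card_map]
  rw [e2]
  have e3 : f.roots.map (fun a : R => X - C (-a))
      = (f.roots.map (fun x : R => -x)).map (fun a : R => X - C a) := by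
    rw [Multiset.map_map]
    rfl
  have e4 : ((-1 : Polynomial R)^(Multiset.card f.roots)) = C ((-1 : R)^(Multiset.card f.roots)) := by
    rw [map_pow, map_neg, map_one]
  rw [e3, e4, ← mul_assoc, ← Polynomial.C_mul,
    Polynomial.roots_C_mul _ (mul_ne_zero (Polynomial.leadingCoeff_ne_zero.mpr h0)
      (pow_ne_zero _ (neg_ne_zero.mpr one_ne_zero))),
    Polynomial.roots_multiset_prod_X_sub_C]

private lemma count_zero_roots (f : Polynomial R) : f.roots.count 0 = f.rootMultiplicity 0 :=
  Polynomial.count_roots f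

theorem stmt11' {R : Type*} [Field R] [LinearOrder R] [IsStrictOrderedRing R]
    (f : Polynomial R) (hf : f.Splits) :
    posRootMult f = signChanges f := by
  by_cases h0 : f = 0
  · subst h0
    have h1 : posRootMult (0 : Polynomial R) = 0 := by
      unfold posRootMult
      rw [Polynomial.roots_zero]
      simp
    have h2 : signChanges (0 : Polynomial R) = 0 := by
      show ((_ : List R).zip _).countP _ = _
      rw [chg_zip]
      simp [chg]
    rw [h1, h2]
  -- notation
  have hcard : Multiset.card f.roots = f.natDegree := Polynomial.splits_iff_card_roots.mp hf
  set g : Polynomial R := f.comp (-X) with hg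
  have hg0 : g ≠ 0 := comp_neg_X_ne_zero h0
  have hgroots : g.roots = f.roots.map (fun x => -x) := roots_comp_neg_X hf h0
  -- the three root counts
  set p := posRootMult f with hp
  set nn := Multiset.card (f.roots.filter (fun a => a < 0)) with hnn
  set z := Multiset.card (f.roots.filter (fun a => a = 0)) with hz
  -- posRootMult g = nn
  have hgpos : posRootMult g = nn := by
    unfold posRootMult
    rw [hgroots, ← Multiset.countP_eq_card_filter, Multiset.countP_map,
      Multiset.filter_congr (fun (x : R) _ => neg_pos (a := x))]
  -- p + nn + z = natDegree
  have hsplit1 : p + Multiset.card (f.roots.filter (fun a => ¬ 0 < a)) = f.natDegree := by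
    rw [hp]
    unfold posRootMult
    rw [← hcard, ← Multiset.card_add, Multiset.filter_add_not]
  have hsplit2 : Multiset.card (f.roots.filter (fun a => ¬ 0 < a)) = nn + z := by
    rw [hnn, hz, ← Multiset.card_add, Multiset.filter_add_filter]
    have e1 : (f.roots.filter (fun a => a < 0 ∨ a = 0)) = f.roots.filter (fun a => ¬ 0 < a) := by
      apply Multiset.filter_congr
      intro x _
      constructor
      · rintro (h | rfl) <;> [exact not_lt.mpr h.le; exact lt_irrefl 0]
      · intro h
        exact lt_or_eq_of_le (not_lt.mp h)
    have e2 : (f.roots.filter (fun a => a < 0 ∧ a = 0)) = 0 := by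
      rw [Multiset.filter_eq_nil]
      rintro a _ ⟨h1, rfl⟩
      exact lt_irrefl 0 h1
    rw [e1, e2]
    simp
  -- z = natTrailingDegree
  have hzt : z = f.natTrailingDegree := by
    have : z = f.roots.count 0 := by
      rw [hz, Multiset.count, Multiset.countP_eq_card_filter]
      congr 1
      apply Multiset.filter_congr
      intro x _
      exact eq_comm
    rw [this, Polynomial.count_roots, Polynomial.rootMultiplicity_eq_natTrailingDegree]
    simp
  -- inequalities
  have hineq1 : p ≤ signChanges f := posRoot_le f.natDegree f le_rfl h0
  have hineq2 : nn ≤ signChanges g := by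
    rw [← hgpos]
    exact posRoot_le g.natDegree g le_rfl hg0
  have hineq3 : signChanges f + signChanges g ≤ f.natDegree - f.natTrailingDegree :=
    two_sided f h0
  have htd : f.natTrailingDegree ≤ f.natDegree := Polynomial.natTrailingDegree_le_natDegree f
  omega

end Descartes

/-- Descartes' rule of signs is exact for real-rooted polynomials: if `f` splits
over the real closed field `R`, then the number of positive roots of `f` counted
with multiplicity equals the number of sign changes in its coefficients. -/
theorem stmt11 {R : Type*} [Field R] [LinearOrder R] [IsStrictOrderedRing R] (hR : IsRealClosed' R)
    (f : Polynomial R) (hf : f.Splits) :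
    posRootMult f = signChanges f := by
  exact stmt11' f hf
end

section
/- (Cassels) Let (K, ≤) be an ordered field, f₁,...,f_ℓ ∈ K[X], g₁,...,g_ℓ ∈ K[X]∖{0}, and a₁,...,a_ℓ ∈ K with aᵢ ≥ 0, such that Σᵢ aᵢ(fᵢ/gᵢ)² is a polynomial in K[X]. Then there exist p₁,...,p_ℓ ∈ K[X] with Σᵢ aᵢ(fᵢ/gᵢ)² = Σᵢ aᵢpᵢ². -/
open Polynomial

lemma expand_sq {R : Type*} [CommRing R] {l : ℕ} (c u v : Fin l → R) (x y : R) :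
    ∑ i, c i * (x * u i + y * v i) ^ 2 =
      x ^ 2 * (∑ i, c i * u i ^ 2) + 2 * x * y * (∑ i, c i * (u i * v i)) +
        y ^ 2 * (∑ i, c i * v i ^ 2) := by
  rw [Finset.mul_sum, Finset.mul_sum, Finset.mul_sum, ← Finset.sum_add_distrib,
    ← Finset.sum_add_distrib]
  exact Finset.sum_congr rfl fun i _ => by ring

lemma aniso {K : Type*} [Field K] [LinearOrder K] [IsStrictOrderedRing K] {l : ℕ} (a : Fin l → K) (ha : ∀ i, 0 ≤ a i)
    (r : Fin l → Polynomial K) (h0 : ∑ i, C (a i) * r i ^ 2 = 0) {j : Fin l}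
    (haj : a j ≠ 0) : r j = 0 := by
  apply Polynomial.funext
  intro x
  simp only [eval_zero]
  have hx : ∑ i, a i * (r i).eval x ^ 2 = 0 := by
    have := congrArg (Polynomial.eval x) h0
    simpa [Polynomial.eval_finset_sum] using this
  have := (Finset.sum_eq_zero_iff_of_nonneg (fun i _ =>
    mul_nonneg (ha i) (sq_nonneg _))).mp hx j (Finset.mem_univ j)
  have h2 : (r j).eval x ^ 2 = 0 := by
    rcases mul_eq_zero.mp this with h | h
    · exact absurd h haj
    · exact h
  exact pow_eq_zero_iff (by norm_num) |>.mp h2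

lemma cassels_key {K : Type*} [Field K] [LinearOrder K] [IsStrictOrderedRing K] {l : ℕ} (a : Fin l → K)
    (ha : ∀ i, 0 ≤ a i) :
    ∀ (n : ℕ) (g : Polynomial K), g ≠ 0 → g.natDegree ≤ n →
      ∀ (h : Polynomial K) (F : Fin l → Polynomial K),
        h * g ^ 2 = ∑ i, C (a i) * F i ^ 2 →
        ∃ p : Fin l → Polynomial K, h = ∑ i, C (a i) * p i ^ 2 := by
  intro n
  induction n using Nat.strong_induction_on with
  | _ n IH =>
  intro g hgne hgd h F hFeq
  -- normalize g to be monic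
  set c : K := g.leadingCoeff with hc
  have hcne : c ≠ 0 := leadingCoeff_ne_zero.mpr hgne
  set g₀ : Polynomial K := g * C c⁻¹ with hg₀
  have hmon : g₀.Monic := monic_mul_leadingCoeff_inv hgne
  have hg₀ne : g₀ ≠ 0 := hmon.ne_zero
  have hg₀d : g₀.natDegree ≤ n := by
    rw [hg₀, natDegree_mul_C (inv_ne_zero hcne)]
    exact hgd
  set F' : Fin l → Polynomial K := fun i => if a i = 0 then 0 else F i * C c⁻¹ with hF'
  have hF'eq : h * g₀ ^ 2 = ∑ i, C (a i) * F' i ^ 2 := by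
    have : h * g₀ ^ 2 = (h * g ^ 2) * C c⁻¹ ^ 2 := by rw [hg₀]; ring
    rw [this, hFeq, Finset.sum_mul]
    refine Finset.sum_congr rfl fun i _ => ?_
    rw [hF']
    by_cases hai : a i = 0
    · simp [hai]
    · simp only [hai, if_false]; ring
  set q : Fin l → Polynomial K := fun i => F' i /ₘ g₀ with hq
  set r : Fin l → Polynomial K := fun i => F' i %ₘ g₀ with hr
  have hrdiv : ∀ i, r i = 1 * F' i + (-g₀) * q i := by
    intro i
    show F' i %ₘ g₀ = 1 * F' i + (-g₀) * (F' i /ₘ g₀)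
    rw [eq_sub_of_add_eq (modByMonic_add_div (F' i) g₀)]
    ring
  by_cases hr0 : ∀ i, r i = 0
  · -- all remainders zero: divide out
    have hdvd : ∀ i, F' i = g₀ * q i := by
      intro i
      have h2 := modByMonic_add_div (F' i) g₀
      have h3 : F' i %ₘ g₀ = r i := rfl
      rw [← h2, h3, hr0 i, zero_add]
    refine ⟨q, ?_⟩
    have : g₀ ^ 2 * h = g₀ ^ 2 * ∑ i, C (a i) * q i ^ 2 := by
      rw [Finset.mul_sum]
      rw [mul_comm (g₀ ^ 2) h, hF'eq]
      refine Finset.sum_congr rfl fun i _ => ?_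
      rw [hdvd i]; ring
    exact mul_left_cancel₀ (pow_ne_zero 2 hg₀ne) this
  · push_neg at hr0
    obtain ⟨j, hj⟩ := hr0
    have haj : a j ≠ 0 := by
      intro h0
      apply hj
      rw [hr]
      have : F' j = 0 := by rw [hF']; simp [h0]
      simp [this]
    set S : Polynomial K := ∑ i, C (a i) * q i ^ 2 with hS
    set B : Polynomial K := ∑ i, C (a i) * (F' i * q i) with hB
    set g₁ : Polynomial K := h * g₀ - 2 * B + g₀ * S with hg₁
    have hRsum : ∑ i, C (a i) * r i ^ 2 = g₀ * g₁ := by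
      calc ∑ i, C (a i) * r i ^ 2
          = ∑ i, C (a i) * (1 * F' i + (-g₀) * q i) ^ 2 :=
            Finset.sum_congr rfl fun i _ => by rw [← hrdiv i]
        _ = 1 ^ 2 * (∑ i, C (a i) * F' i ^ 2) + 2 * 1 * (-g₀) * B + (-g₀) ^ 2 * S :=
            expand_sq _ _ _ _ _
        _ = g₀ * g₁ := by rw [← hF'eq, hg₁]; ring
    have hRne : ∑ i, C (a i) * r i ^ 2 ≠ 0 := fun h0 => hj (aniso a ha r h0 haj)
    have hg₁ne : g₁ ≠ 0 := by
      intro h0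
      rw [h0, mul_zero] at hRsum
      exact hRne hRsum
    -- degree bound
    have hbot : g₀.degree + g₀.degree ≠ ⊥ :=
      WithBot.add_ne_bot.mpr ⟨degree_ne_bot.mpr hg₀ne, degree_ne_bot.mpr hg₀ne⟩
    have hdeg : g₁.natDegree < g₀.natDegree := by
      have hdR : (∑ i, C (a i) * r i ^ 2).degree < g₀.degree + g₀.degree := by
        refine lt_of_le_of_lt (degree_sum_le _ _) ?_
        rw [Finset.sup_lt_iff]
        · intro i _
          rcases eq_or_ne (r i) 0 with h0 | h0
          · rw [h0]
            have h00 : C (a i) * (0 : Polynomial K) ^ 2 = 0 := by ring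
            rw [h00, degree_zero]
            exact bot_lt_iff_ne_bot.mpr hbot
          · have h1 : (C (a i) * r i ^ 2).degree ≤ (r i).degree + (r i).degree := by
              refine le_trans (degree_mul_le _ _) ?_
              refine le_trans (add_le_add degree_C_le (degree_pow_le _ 2)) ?_
              simp [two_smul]
            refine lt_of_le_of_lt h1 ?_
            have hlt : (r i).degree < g₀.degree := degree_modByMonic_lt _ hmon
            have hrb : (r i).degree ≠ ⊥ := degree_ne_bot.mpr h0
            exact WithBot.add_lt_add_of_lt_of_le hrb hlt hlt.le
        · exact bot_lt_iff_ne_bot.mpr hbot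
      rw [hRsum, degree_mul] at hdR
      have : g₁.degree < g₀.degree :=
        (WithBot.add_lt_add_iff_left (degree_ne_bot.mpr hg₀ne)).mp hdR
      exact natDegree_lt_natDegree hg₁ne this
    -- new representation
    set F'' : Fin l → Polynomial K :=
      fun i => (S - h) * F' i + (2 * (h * g₀ - B)) * q i with hF''
    have hF''eq : h * g₁ ^ 2 = ∑ i, C (a i) * F'' i ^ 2 := by
      rw [hF'']
      rw [expand_sq (fun i => C (a i)) F' q (S - h) (2 * (h * g₀ - B))]
      rw [← hF'eq, ← hS, ← hB]
      rw [hg₁]; ring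
    exact IH g₁.natDegree (lt_of_lt_of_le hdeg hg₀d) g₁ hg₁ne le_rfl h F'' hF''eq

/-- Cassels' theorem: if a weighted sum of squares of rational functions (with
nonnegative weights from an ordered field) is a polynomial, then it is a weighted
sum of squares of polynomials with the same weights. -/
theorem stmt14 {K : Type*} [Field K] [LinearOrder K] [IsStrictOrderedRing K] (l : ℕ)
    (f g : Fin l → Polynomial K) (hg : ∀ i, g i ≠ 0) (a : Fin l → K)
    (ha : ∀ i, 0 ≤ a i) (h : Polynomial K)
    (hsum : algebraMap (Polynomial K) (RatFunc K) h =
      ∑ i, algebraMap (Polynomial K) (RatFunc K) (Polynomial.C (a i)) *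
        (algebraMap (Polynomial K) (RatFunc K) (f i) /
          algebraMap (Polynomial K) (RatFunc K) (g i)) ^ 2) :
    ∃ p : Fin l → Polynomial K, h = ∑ i, Polynomial.C (a i) * p i ^ 2 := by
  set φ := algebraMap (Polynomial K) (RatFunc K) with hφ
  have hinj : Function.Injective φ := IsFractionRing.injective _ _
  set G : Polynomial K := ∏ i, g i with hG
  have hGne : G ≠ 0 := Finset.prod_ne_zero_iff.mpr fun i _ => hg i
  set F : Fin l → Polynomial K := fun i => f i * (G / g i) with hF
  have hFg : ∀ i, F i * g i = f i * G := by
    intro i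
    have hdvd : g i ∣ G := Finset.dvd_prod_of_mem g (Finset.mem_univ i)
    rw [hF]
    calc f i * (G / g i) * g i = f i * (g i * (G / g i)) := by ring
      _ = f i * G := by rw [EuclideanDomain.mul_div_cancel' (hg i) hdvd]
  have hFeq : h * G ^ 2 = ∑ i, C (a i) * F i ^ 2 := by
    apply hinj
    rw [map_mul, map_pow, map_sum]
    rw [hsum, Finset.sum_mul]
    refine Finset.sum_congr rfl fun i _ => ?_
    rw [map_mul, map_pow]
    have hgi : φ (g i) ≠ 0 := fun h0 => hg i (hinj (by simpa using h0))
    have : φ (f i) / φ (g i) * φ G = φ (F i) := by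
      rw [div_mul_eq_mul_div, ← map_mul, ← hFg i, map_mul,
        mul_div_cancel_right₀ _ hgi]
    rw [← this]
    ring
  exact cassels_key a ha G.natDegree G hGne le_rfl h F hFeq
end

section
/- The Motzkin polynomial f = X⁴Y² + X²Y⁴ - 3X²Y² + 1 ∈ ℝ[X,Y] is nonnegative on ℝ² but is not a sum of squares of polynomials in ℝ[X,Y]. -/
open MvPolynomial

/-- The Motzkin polynomial `X⁴Y² + X²Y⁴ - 3X²Y² + 1`. -/
noncomputable def motzkin : MvPolynomial (Fin 2) ℝ :=
  X 0 ^ 4 * X 1 ^ 2 + X 0 ^ 2 * X 1 ^ 4 - C 3 * X 0 ^ 2 * X 1 ^ 2 + 1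

section Aux

lemma sos_zero_real {n : ℕ} (g : Fin n → ℝ) (h : ∑ i, g i ^ 2 = 0) : ∀ i, g i = 0 := by
  intro i
  have h1 : ∀ j ∈ Finset.univ, (0 : ℝ) ≤ g j ^ 2 := fun j _ => sq_nonneg _
  have h2 := (Finset.sum_eq_zero_iff_of_nonneg h1).mp h i (Finset.mem_univ i)
  exact pow_eq_zero_iff two_ne_zero |>.mp h2

lemma sos_zero_poly {A : Type*} [CommRing A] [IsDomain A] [Infinite A]
    (hA : ∀ (n : ℕ) (g : Fin n → A), ∑ i, g i ^ 2 = 0 → ∀ i, g i = 0)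
    (n : ℕ) (g : Fin n → Polynomial A) (h : ∑ i, g i ^ 2 = 0) : ∀ i, g i = 0 := by
  intro i
  have key : ∀ r : A, (g i).eval r = 0 := by
    intro r
    have h' := congrArg (Polynomial.eval r) h
    simp only [Polynomial.eval_finset_sum, Polynomial.eval_pow, Polynomial.eval_zero] at h'
    exact hA n (fun j => (g j).eval r) h' i
  exact Polynomial.funext (q := 0) (by simpa using key)

lemma coeff_sq_aux {A : Type*} [CommRing A] (p : Polynomial A) {D : ℕ} (hp : p.natDegree ≤ D) :
    (p ^ 2).coeff (2 * D) = p.coeff D ^ 2 := by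
  rw [sq, sq, two_mul, Polynomial.coeff_mul_add_eq_of_natDegree_le hp hp]

lemma coeff_sq_two {A : Type*} [CommRing A] (p : Polynomial A) :
    (p ^ 2).coeff 2 = 2 * (p.coeff 0 * p.coeff 2) + p.coeff 1 ^ 2 := by
  rw [sq, Polynomial.coeff_mul, Finset.Nat.sum_antidiagonal_eq_sum_range_succ_mk]
  simp [Finset.sum_range_succ]
  ring

lemma sos_natDegree {A : Type*} [CommRing A]
    (hA : ∀ (n : ℕ) (g : Fin n → A), ∑ i, g i ^ 2 = 0 → ∀ i, g i = 0)
    {n : ℕ} (P : Fin n → Polynomial A) {S : Polynomial A} (h : ∑ i, P i ^ 2 = S)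
    {m : ℕ} (hS : S.natDegree ≤ m) : ∀ i, 2 * (P i).natDegree ≤ m := by
  intro i
  by_contra hlt
  push_neg at hlt
  obtain ⟨i₀, -, hi₀⟩ := Finset.exists_mem_eq_sup Finset.univ ⟨i, Finset.mem_univ i⟩
      (fun j => (P j).natDegree)
  set D := Finset.univ.sup (fun j => (P j).natDegree) with hD
  have hle : ∀ j, (P j).natDegree ≤ D := fun j => Finset.le_sup (f := fun j => (P j).natDegree) (Finset.mem_univ j)
  have hmD : m < 2 * D := lt_of_lt_of_le hlt (by have := hle i; omega)
  have hcoeff : S.coeff (2 * D) = 0 :=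
    Polynomial.coeff_eq_zero_of_natDegree_lt (lt_of_le_of_lt hS hmD)
  have hsum : ∑ j, (P j).coeff D ^ 2 = 0 := by
    have h2 : (∑ j, P j ^ 2).coeff (2 * D) = S.coeff (2 * D) := by rw [h]
    rw [Polynomial.finset_sum_coeff, hcoeff] at h2
    calc ∑ j, (P j).coeff D ^ 2 = ∑ j, (P j ^ 2).coeff (2 * D) :=
          Finset.sum_congr rfl (fun j _ => (coeff_sq_aux (P j) (hle j)).symm)
      _ = 0 := h2
  have hz := hA n _ hsum
  have hP0 : P i₀ = 0 := by
    by_contra hne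
    have hlc : (P i₀).coeff ((P i₀).natDegree) ≠ 0 :=
      Polynomial.leadingCoeff_ne_zero.mpr hne
    rw [← hi₀] at hlc
    exact hlc (hz i₀)
  have hD0 : D = 0 := by rw [hi₀, hP0, Polynomial.natDegree_zero]
  omega

end Aux

/-- The Motzkin polynomial is nonnegative on `ℝ²` but is not a sum of squares of
polynomials. -/
theorem stmt15 :
    (∀ v : Fin 2 → ℝ, 0 ≤ eval v motzkin) ∧
      ¬ ∃ (n : ℕ) (p : Fin n → MvPolynomial (Fin 2) ℝ), motzkin = ∑ i, p i ^ 2 := by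
  constructor
  · intro v
    have h : eval v motzkin =
        (v 0) ^ 4 * (v 1) ^ 2 + (v 0) ^ 2 * (v 1) ^ 4 - 3 * ((v 0) ^ 2 * (v 1) ^ 2) + 1 := by
      simp [motzkin]
      ring
    rw [h]
    nlinarith [sq_nonneg (v 0 * v 1), sq_nonneg (v 0 * v 1 * (v 0 ^ 2 + v 1 ^ 2 - 2)),
      sq_nonneg (v 0 ^ 2 - v 1 ^ 2), sq_nonneg (v 0 * v 1 - 1), sq_nonneg (v 0 * v 1 + 1),
      sq_nonneg (v 0 ^ 2 * v 1 - v 1), sq_nonneg (v 0 * v 1 ^ 2 - v 0),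
      sq_nonneg (v 0 ^ 2 + v 1 ^ 2 - 2)]
  · rintro ⟨n, p, hp⟩
    classical
    -- real-polynomial versions of the "sum of squares is zero" lemma
    have hA1 : ∀ (m : ℕ) (g : Fin m → Polynomial ℝ), ∑ i, g i ^ 2 = 0 → ∀ i, g i = 0 :=
      sos_zero_poly (fun m g h => sos_zero_real g h)
    have hA2 : ∀ (m : ℕ) (g : Fin m → Polynomial (Polynomial ℝ)),
        ∑ i, g i ^ 2 = 0 → ∀ i, g i = 0 :=
      sos_zero_poly hA1
    -- transport to ℝ[x][y]
    set φ : MvPolynomial (Fin 2) ℝ →ₐ[ℝ] Polynomial (Polynomial ℝ) :=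
      aeval ![Polynomial.C Polynomial.X, Polynomial.X] with hφ
    set Q : Fin n → Polynomial (Polynomial ℝ) := fun i => φ (p i) with hQdef
    have hQ : ∑ i, Q i ^ 2 = φ motzkin := by
      rw [hp, map_sum]
      simp [hQdef]
    have hE : φ motzkin =
        Polynomial.monomial 2 (Polynomial.X ^ 4 - 3 * Polynomial.X ^ 2)
          + Polynomial.monomial 4 (Polynomial.X ^ 2)
          + Polynomial.monomial 0 1 := by
      simp [motzkin, hφ, ← Polynomial.C_mul_X_pow_eq_monomial, map_sub, map_mul, map_pow,
        map_ofNat, map_one]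
      ring
    rw [hE] at hQ
    have hdeg4 : (Polynomial.monomial 2 (Polynomial.X ^ 4 - 3 * Polynomial.X ^ 2)
          + Polynomial.monomial 4 ((Polynomial.X : Polynomial ℝ) ^ 2)
          + Polynomial.monomial 0 (1 : Polynomial ℝ)).natDegree ≤ 4 := by
      refine (Polynomial.natDegree_add_le _ _).trans (max_le ((Polynomial.natDegree_add_le _ _).trans
        (max_le ?_ ?_)) ?_) <;>
        exact (Polynomial.natDegree_monomial_le _).trans (by norm_num)
    have hQ2 : ∀ i, (Q i).natDegree ≤ 2 := by
      intro i
      have := sos_natDegree hA1 Q hQ hdeg4 i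
      omega
    set a : Fin n → Polynomial ℝ := fun i => (Q i).coeff 0 with ha_def
    set b : Fin n → Polynomial ℝ := fun i => (Q i).coeff 1 with hb_def
    set c : Fin n → Polynomial ℝ := fun i => (Q i).coeff 2 with hc_def
    -- coefficient 0
    have ha : ∑ i, a i ^ 2 = 1 := by
      have h0 := congrArg (fun q => Polynomial.coeff q 0) hQ
      simp only [Polynomial.finset_sum_coeff, Polynomial.coeff_add,
        Polynomial.coeff_monomial] at h0
      simpa [sq, Polynomial.mul_coeff_zero, ha_def] using h0
    -- coefficient 4
    have hc : ∑ i, c i ^ 2 = Polynomial.X ^ 2 := by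
      have h4 := congrArg (fun q => Polynomial.coeff q 4) hQ
      simp only [Polynomial.finset_sum_coeff, Polynomial.coeff_add,
        Polynomial.coeff_monomial] at h4
      have : ∑ i, (Q i ^ 2).coeff 4 = ∑ i, c i ^ 2 :=
        Finset.sum_congr rfl (fun i _ => by
          have := coeff_sq_aux (Q i) (hQ2 i); simpa [hc_def] using this)
      rw [this] at h4
      simpa using h4
    -- coefficient 2
    have hb2 : ∑ i, (2 * (a i * c i) + b i ^ 2) =
        Polynomial.X ^ 4 - 3 * Polynomial.X ^ 2 := by
      have h2 := congrArg (fun q => Polynomial.coeff q 2) hQ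
      simp only [Polynomial.finset_sum_coeff, Polynomial.coeff_add,
        Polynomial.coeff_monomial] at h2
      have : ∑ i, (Q i ^ 2).coeff 2 = ∑ i, (2 * (a i * c i) + b i ^ 2) :=
        Finset.sum_congr rfl (fun i _ => by
          have := coeff_sq_two (Q i); simpa [ha_def, hb_def, hc_def] using this)
      rw [this] at h2
      simpa using h2
    -- degrees of a, c
    have haD : ∀ i, (a i).natDegree = 0 := by
      intro i
      have := sos_natDegree (fun m g h => sos_zero_real g h) a ha
        (m := 0) (by simp) i
      omega
    have hcD : ∀ i, (c i).natDegree ≤ 1 := by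
      intro i
      have hX2 : ((Polynomial.X : Polynomial ℝ) ^ 2).natDegree ≤ 2 := by
        simp [Polynomial.natDegree_X_pow]
      have := sos_natDegree (fun m g h => sos_zero_real g h) c hc hX2 i
      omega
    -- b as a sum of squares
    have hbS : ∑ i, b i ^ 2 =
        Polynomial.X ^ 4 - 3 * Polynomial.X ^ 2 - 2 * ∑ i, a i * c i := by
      have : ∑ i, (2 * (a i * c i) + b i ^ 2) =
          2 * ∑ i, a i * c i + ∑ i, b i ^ 2 := by
        rw [Finset.sum_add_distrib, Finset.mul_sum]
      rw [this] at hb2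
      linear_combination hb2
    have hbSdeg : (Polynomial.X ^ 4 - 3 * Polynomial.X ^ 2
        - 2 * ∑ i, a i * c i : Polynomial ℝ).natDegree ≤ 4 := by
      refine (Polynomial.natDegree_sub_le _ _).trans (max_le ?_ ?_)
      · refine (Polynomial.natDegree_sub_le _ _).trans (max_le ?_ ?_)
        · simp [Polynomial.natDegree_X_pow]
        · refine (Polynomial.natDegree_mul_le).trans ?_
          simp [Polynomial.natDegree_X_pow]
      · refine (Polynomial.natDegree_mul_le).trans ?_
        have : (∑ i, a i * c i : Polynomial ℝ).natDegree ≤ 1 := by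
          refine Polynomial.natDegree_sum_le_of_forall_le _ _ (fun i _ => ?_)
          refine (Polynomial.natDegree_mul_le).trans ?_
          have := haD i; have := hcD i; omega
        simp only [Polynomial.natDegree_ofNat, zero_add]
        omega
    have hbD : ∀ i, (b i).natDegree ≤ 2 := by
      intro i
      have := sos_natDegree (fun m g h => sos_zero_real g h) b hbS hbSdeg i
      omega
    -- real coefficients
    have hc0 : ∀ i, (c i).coeff 0 = 0 := by
      have h0 := congrArg (fun q => Polynomial.coeff q 0) hc
      simp only [Polynomial.finset_sum_coeff] at h0
      have h0' : ∑ i, (c i).coeff 0 ^ 2 = 0 := by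
        have : ∑ i, (c i ^ 2).coeff 0 = ∑ i, (c i).coeff 0 ^ 2 :=
          Finset.sum_congr rfl (fun i _ => by simp [sq, Polynomial.mul_coeff_zero])
        rw [this] at h0
        simpa using h0
      exact sos_zero_real _ h0'
    have hb0 : ∀ i, (b i).coeff 0 = 0 := by
      have h0 := congrArg (fun q => Polynomial.coeff q 0) hb2
      simp only [Polynomial.finset_sum_coeff] at h0
      have h0' : ∑ i, (b i).coeff 0 ^ 2 = 0 := by
        have : ∑ i, (2 * (a i * c i) + b i ^ 2).coeff 0 = ∑ i, (b i).coeff 0 ^ 2 :=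
          Finset.sum_congr rfl (fun i _ => by
            simp [sq, Polynomial.mul_coeff_zero, hc0 i])
        rw [this] at h0
        simpa using h0
      exact sos_zero_real _ h0'
    -- the contradiction at coefficient x² of coefficient y²
    have hfinal : ∑ i, (b i).coeff 1 ^ 2 = -3 := by
      have h2 := congrArg (fun q => Polynomial.coeff q 2) hb2
      simp only [Polynomial.finset_sum_coeff] at h2
      have : ∑ i, (2 * (a i * c i) + b i ^ 2).coeff 2 = ∑ i, (b i).coeff 1 ^ 2 :=
        Finset.sum_congr rfl (fun i _ => by
          have hac : (a i * c i).natDegree < 2 := by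
            have := Polynomial.natDegree_mul_le (p := a i) (q := c i)
            have := haD i; have := hcD i; omega
          have hacd : ((2 : Polynomial ℝ) * (a i * c i)).natDegree < 2 := by
            have h1 := Polynomial.natDegree_mul_le (p := (2 : Polynomial ℝ)) (q := a i * c i)
            simp only [Polynomial.natDegree_ofNat, zero_add] at h1
            omega
          rw [Polynomial.coeff_add, coeff_sq_two, hb0 i,
            Polynomial.coeff_eq_zero_of_natDegree_lt hacd]
          ring)
      rw [this] at h2
      simpa using h2
    have hpos : (0 : ℝ) ≤ ∑ i, (b i).coeff 1 ^ 2 :=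
      Finset.sum_nonneg (fun i _ => sq_nonneg _)
    linarith
end

section
/- Let K be a field and f, g ∈ K[X₁,...,Xₙ]. Then the Newton polytope of fg equals the Minkowski sum of the Newton polytopes of f and g: N(fg) = N(f) + N(g). -/
set_option maxHeartbeats 1000000


open Pointwise

/-- The Newton polytope of a multivariate polynomial: the convex hull in `ℝⁿ` of
the exponent vectors of its nonzero terms. -/
noncomputable def newtonPolytope {K : Type*} [CommSemiring K] {n : ℕ}
    (f : MvPolynomial (Fin n) K) : Set (Fin n → ℝ) :=
  convexHull ℝ ((fun α : Fin n →₀ ℕ => fun i => (α i : ℝ)) ''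
    (f.support : Set (Fin n →₀ ℕ)))

section aux

variable {n : ℕ}

/-- The exponent-embedding map as an additive monoid hom. -/
noncomputable def expEmb (n : ℕ) : (Fin n →₀ ℕ) →+ (Fin n → ℝ) where
  toFun α := fun i => (α i : ℝ)
  map_zero' := by ext i; simp
  map_add' a b := by ext i; simp

lemma expEmb_injective : Function.Injective (expEmb n) := by
  intro a b h
  ext i
  exact Nat.cast_injective (congrFun h i)

/-- In an extreme point decomposition of a Minkowski sum, the parts are unique. -/
lemma unique_decomp {E : Type*} [AddCommGroup E] [Module ℝ E]
    {P Q : Set E} {v p p' q q' : E}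
    (hv : v ∈ (P + Q).extremePoints ℝ)
    (hp : p ∈ P) (hp' : p' ∈ P) (hq : q ∈ Q) (hq' : q' ∈ Q)
    (h1 : p + q = v) (h2 : p' + q' = v) : p = p' ∧ q = q' := by
  have hmem1 : p + q' ∈ P + Q := Set.add_mem_add hp hq'
  have hmem2 : p' + q ∈ P + Q := Set.add_mem_add hp' hq
  have hseg : v ∈ openSegment ℝ (p + q') (p' + q) := by
    refine ⟨1/2, 1/2, by norm_num, by norm_num, by norm_num, ?_⟩
    have : (1/2 : ℝ) • (p + q') + (1/2 : ℝ) • (p' + q)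
        = (1/2 : ℝ) • ((p + q) + (p' + q')) := by
      module
    rw [this, h1, h2]
    module
  obtain ⟨e1, e2⟩ := (mem_extremePoints.mp hv).2 _ hmem1 _ hmem2 hseg
  constructor
  · -- p' + q = v = p + q
    have : p' + q = p + q := by rw [e2, ← h1]
    exact ((add_left_injective q) this).symm
  · have : p + q' = p + q := by rw [e1, h1]
    exact add_right_injective p this.symm

end aux

/-- The Newton polytope of a product is the Minkowski sum of the Newton polytopes. -/
theorem stmt16 {K : Type*} [Field K] {n : ℕ} (f g : MvPolynomial (Fin n) K) :
    newtonPolytope (f * g) = newtonPolytope f + newtonPolytope g := by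
  set φ : (Fin n →₀ ℕ) →+ (Fin n → ℝ) := expEmb n with hφ
  have hφfun : (fun α : Fin n →₀ ℕ => fun i => (α i : ℝ)) = ⇑φ := rfl
  -- RHS as a single convex hull
  have key : newtonPolytope f + newtonPolytope g
      = convexHull ℝ (φ '' ((f.support + g.support : Finset (Fin n →₀ ℕ)) :
          Set (Fin n →₀ ℕ))) := by
    rw [newtonPolytope, newtonPolytope, hφfun, Finset.coe_add, Set.image_add,
      convexHull_add]
  rw [key, newtonPolytope, hφfun]
  apply Set.Subset.antisymm
  · -- easy direction
    apply convexHull_mono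
    apply Set.image_mono
    exact_mod_cast MvPolynomial.support_mul f g
  · -- hard direction
    set T : Set (Fin n → ℝ) :=
      φ '' ((f.support + g.support : Finset (Fin n →₀ ℕ)) : Set (Fin n →₀ ℕ)) with hT
    have hTfin : T.Finite :=
      Set.Finite.image _ (Finset.finite_toSet _)
    have hEfin : ((convexHull ℝ T).extremePoints ℝ).Finite :=
      hTfin.subset extremePoints_convexHull_subset
    have hKM : closure (convexHull ℝ ((convexHull ℝ T).extremePoints ℝ))
        = convexHull ℝ T :=
      closure_convexHull_extremePoints (hTfin.isCompact_convexHull (𝕜 := ℝ)) (convex_convexHull ℝ T)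
    have hclosed : closure (convexHull ℝ ((convexHull ℝ T).extremePoints ℝ))
        = convexHull ℝ ((convexHull ℝ T).extremePoints ℝ) :=
      (hEfin.isClosed_convexHull (𝕜 := ℝ)).closure_eq
    rw [← hKM, hclosed]
    apply convexHull_mono
    -- each extreme point comes from the support of f*g
    intro v hv
    obtain ⟨γ, hγ, hvγ⟩ := extremePoints_convexHull_subset hv
    rw [Finset.mem_coe, Finset.mem_add] at hγ
    obtain ⟨α, hα, β, hβ, rfl⟩ := hγ
    -- rewrite the hull of T as a Minkowski sum of hulls
    have hTsum : convexHull ℝ T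
        = convexHull ℝ (φ '' (f.support : Set (Fin n →₀ ℕ)))
          + convexHull ℝ (φ '' (g.support : Set (Fin n →₀ ℕ))) := by
      rw [hT, Finset.coe_add, Set.image_add, convexHull_add]
    have hv' : v ∈ (convexHull ℝ (φ '' (f.support : Set (Fin n →₀ ℕ)))
          + convexHull ℝ (φ '' (g.support : Set (Fin n →₀ ℕ)))).extremePoints ℝ := by
      rw [← hTsum]; exact hv
    -- key coefficient computation
    have hcoeff : (f * g).coeff (α + β) = f.coeff α * g.coeff β := by
      rw [MvPolynomial.coeff_mul]
      rw [Finset.sum_eq_single_of_mem (α, β) (Finset.HasAntidiagonal.mem_antidiagonal.mpr rfl)]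
      rintro ⟨a, b⟩ hab hne
      rw [Finset.HasAntidiagonal.mem_antidiagonal] at hab
      by_contra hprod
      have ha : a ∈ f.support := by
        rw [MvPolynomial.mem_support_iff]
        intro h; exact hprod (by simp [h])
      have hb : b ∈ g.support := by
        rw [MvPolynomial.mem_support_iff]
        intro h; exact hprod (by simp [h])
      have hpa : φ a ∈ convexHull ℝ (φ '' (f.support : Set (Fin n →₀ ℕ))) :=
        subset_convexHull ℝ _ ⟨a, ha, rfl⟩
      have hpb : φ b ∈ convexHull ℝ (φ '' (g.support : Set (Fin n →₀ ℕ))) :=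
        subset_convexHull ℝ _ ⟨b, hb, rfl⟩
      have hpα : φ α ∈ convexHull ℝ (φ '' (f.support : Set (Fin n →₀ ℕ))) :=
        subset_convexHull ℝ _ ⟨α, hα, rfl⟩
      have hpβ : φ β ∈ convexHull ℝ (φ '' (g.support : Set (Fin n →₀ ℕ))) :=
        subset_convexHull ℝ _ ⟨β, hβ, rfl⟩
      have h1 : φ α + φ β = v := by rw [← hvγ, ← map_add]
      have h2 : φ a + φ b = v := by rw [← hvγ, ← map_add, hab]
      obtain ⟨e1, e2⟩ := unique_decomp hv' hpα hpa hpβ hpb h1 h2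
      have ha2 : α = a := expEmb_injective e1
      have hb2 : β = b := expEmb_injective e2
      exact hne (Prod.ext ha2.symm hb2.symm)
    have hne : (f * g).coeff (α + β) ≠ 0 := by
      rw [hcoeff]
      exact mul_ne_zero (MvPolynomial.mem_support_iff.mp hα)
        (MvPolynomial.mem_support_iff.mp hβ)
    exact ⟨α + β, MvPolynomial.mem_support_iff.mpr hne, hvγ⟩
end

section
/- Let (K, ≤) be an ordered field and f = Σᵢ pᵢ² a sum of squares in K[X₁,...,Xₙ]. Then N(f) = 2·conv(N(p₁) ∪ ... ∪ N(p_ℓ)), and every vertex coefficient of f is positive. In particular, for each i, N(pᵢ) ⊆ ½·N(f). -/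
open Pointwise

/-- The embedding of exponent vectors into `ℝⁿ`. -/
noncomputable def stmt17Emb {n : ℕ} (α : Fin n →₀ ℕ) : Fin n → ℝ := fun i => (α i : ℝ)

lemma stmt17Emb_inj {n : ℕ} : Function.Injective (stmt17Emb (n := n)) := by
  intro a b h
  ext i
  have : ((a i : ℝ)) = (b i : ℝ) := congrFun h i
  exact_mod_cast this

lemma stmt17Emb_add {n : ℕ} (a b : Fin n →₀ ℕ) :
    stmt17Emb (a + b) = stmt17Emb a + stmt17Emb b := by
  funext i; simp [stmt17Emb]

/-- For a sum of squares `f = Σ pᵢ²` over an ordered field: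
`N(f) = 2·conv(N(p₁) ∪ … ∪ N(p_ℓ))`, every vertex coefficient of `f` is positive,
and each `N(pᵢ) ⊆ ½·N(f)`. -/
theorem stmt17 {K : Type*} [Field K] [LinearOrder K] [IsStrictOrderedRing K] {n l : ℕ}
    (p : Fin l → MvPolynomial (Fin n) K) (f : MvPolynomial (Fin n) K)
    (hf : f = ∑ i, p i ^ 2) :
    newtonPolytope f = (2 : ℝ) • convexHull ℝ (⋃ i, newtonPolytope (p i)) ∧
      (∀ α : Fin n →₀ ℕ,
        (fun i => (α i : ℝ)) ∈ Set.extremePoints ℝ (newtonPolytope f) →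
          0 < f.coeff α) ∧
      ∀ i, newtonPolytope (p i) ⊆ (2⁻¹ : ℝ) • newtonPolytope f := by
  classical
  set E : Set (Fin n → ℝ) :=
    ⋃ i, stmt17Emb '' ((p i).support : Set (Fin n →₀ ℕ)) with hE
  have hEfin : E.Finite :=
    Set.finite_iUnion fun i => ((p i).support.finite_toSet.image _)
  have hnf : newtonPolytope f = convexHull ℝ (stmt17Emb '' (f.support : Set (Fin n →₀ ℕ))) := rfl
  have hnp : ∀ i, newtonPolytope (p i)
      = convexHull ℝ (stmt17Emb '' ((p i).support : Set (Fin n →₀ ℕ))) := fun _ => rfl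
  have hconvE : convexHull ℝ (⋃ i, newtonPolytope (p i)) = convexHull ℝ E := by
    apply Set.Subset.antisymm
    · apply convexHull_min _ (convex_convexHull ℝ E)
      refine Set.iUnion_subset fun i => ?_
      rw [hnp i, hE]
      exact convexHull_mono
        (Set.subset_iUnion (fun j => stmt17Emb '' ((p j).support : Set (Fin n →₀ ℕ))) i)
    · apply convexHull_mono
      refine Set.iUnion_subset fun i => ?_
      refine Set.Subset.trans ?_ (Set.subset_iUnion (fun i => newtonPolytope (p i)) i)
      rw [hnp i]
      exact subset_convexHull ℝ _
  -- two • convexHull E = convexHull E + convexHull E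
  have htwo : (2 : ℝ) • convexHull ℝ E = convexHull ℝ E + convexHull ℝ E := by
    have h := (convex_convexHull ℝ E).add_smul (p := (1:ℝ)) (q := 1) zero_le_one zero_le_one
    rw [one_smul] at h
    rw [show (2:ℝ) = 1 + 1 by norm_num, h]
  -- forward inclusion
  have hA : newtonPolytope f ⊆ (2 : ℝ) • convexHull ℝ E := by
    rw [hnf]
    apply convexHull_min _ ((convex_convexHull ℝ E).smul 2)
    rintro _ ⟨α, hα, rfl⟩
    have hα' : α ∈ (∑ i, p i ^ 2).support := by
      rw [← hf]; exact hα
    have hb := MvPolynomial.support_sum hα'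
    rw [Finset.mem_biUnion] at hb
    obtain ⟨i, -, hi⟩ := hb
    rw [sq] at hi
    have hm := MvPolynomial.support_mul _ _ hi
    rw [Finset.mem_add] at hm
    obtain ⟨β, hβ, γ, hγ, hbg⟩ := hm
    have hβE : stmt17Emb β ∈ convexHull ℝ E :=
      subset_convexHull ℝ E (Set.mem_iUnion.2 ⟨i, Set.mem_image_of_mem _ hβ⟩)
    have hγE : stmt17Emb γ ∈ convexHull ℝ E :=
      subset_convexHull ℝ E (Set.mem_iUnion.2 ⟨i, Set.mem_image_of_mem _ hγ⟩)
    have heq : stmt17Emb α = stmt17Emb β + stmt17Emb γ := by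
      rw [← stmt17Emb_add, hbg]
    rw [htwo]
    show stmt17Emb α ∈ _
    rw [heq]
    exact Set.add_mem_add hβE hγE
  -- key vertex lemma
  have hkey : ∀ α : Fin n →₀ ℕ,
      stmt17Emb α ∈ Set.extremePoints ℝ ((2 : ℝ) • convexHull ℝ E) → 0 < f.coeff α := by
    intro α hα
    obtain ⟨hmem, hext⟩ := hα
    have hαE : stmt17Emb α ∈ (2 : ℝ) • E := by
      have hx : stmt17Emb α ∈ Set.extremePoints ℝ (convexHull ℝ ((2:ℝ) • E)) := by
        rw [convexHull_smul]; exact ⟨hmem, hext⟩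
      exact extremePoints_convexHull_subset hx
    obtain ⟨w, hwE, hw⟩ := hαE
    obtain ⟨j, hj⟩ := Set.mem_iUnion.1 hwE
    obtain ⟨β, hβ, rfl⟩ := hj
    have hαβ : α = β + β := by
      apply stmt17Emb_inj
      rw [stmt17Emb_add, ← hw]
      exact two_smul ℝ (stmt17Emb β)
    -- midpoint property
    have hmid : ∀ x ∈ convexHull ℝ E, ∀ y ∈ convexHull ℝ E, x + y = stmt17Emb α → x = y := by
      intro x hx y hy hxy
      by_contra hne
      have h2x : (2:ℝ) • x ∈ (2:ℝ) • convexHull ℝ E := Set.smul_mem_smul_set hx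
      have h2y : (2:ℝ) • y ∈ (2:ℝ) • convexHull ℝ E := Set.smul_mem_smul_set hy
      have hseg : stmt17Emb α ∈ openSegment ℝ ((2:ℝ) • x) ((2:ℝ) • y) := by
        refine ⟨1/2, 1/2, by norm_num, by norm_num, by norm_num, ?_⟩
        rw [smul_smul, smul_smul]
        norm_num
        exact hxy
      have h := hext h2x h2y hseg
      have h2 : (2:ℝ) • x = (2:ℝ) • y := h.trans (hext h2y h2x (by rw [openSegment_symm]; exact hseg)).symm
      exact hne (smul_right_injective (Fin n → ℝ) two_ne_zero h2)
    -- coefficient computation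
    have hcoeff : ∀ i : Fin l, (p i ^ 2).coeff α = (p i).coeff β ^ 2 := by
      intro i
      rw [sq, MvPolynomial.coeff_mul, sq]
      refine Finset.sum_eq_single (β, β) ?_ ?_
      · rintro ⟨x, y⟩ hxy hne
        rw [Finset.HasAntidiagonal.mem_antidiagonal] at hxy
        by_contra hz
        have hx0 : x ∈ (p i).support :=
          MvPolynomial.mem_support_iff.2 (left_ne_zero_of_mul hz)
        have hy0 : y ∈ (p i).support :=
          MvPolynomial.mem_support_iff.2 (right_ne_zero_of_mul hz)
        have hxE : stmt17Emb x ∈ convexHull ℝ E :=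
          subset_convexHull ℝ E (Set.mem_iUnion.2 ⟨i, Set.mem_image_of_mem _ hx0⟩)
        have hyE : stmt17Emb y ∈ convexHull ℝ E :=
          subset_convexHull ℝ E (Set.mem_iUnion.2 ⟨i, Set.mem_image_of_mem _ hy0⟩)
        have hsum : stmt17Emb x + stmt17Emb y = stmt17Emb α := by
          rw [← stmt17Emb_add, hxy]
        have hxy' : x = y := stmt17Emb_inj (hmid _ hxE _ hyE hsum)
        have hxβ : x = β := by
          ext k
          have h1 : (x + y) k = (β + β) k := by rw [hxy, hαβ]
          rw [Finsupp.add_apply, Finsupp.add_apply, ← hxy'] at h1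
          omega
        exact hne (by rw [hxβ, ← hxy', hxβ])
      · intro hnot
        exact absurd (Finset.HasAntidiagonal.mem_antidiagonal.2 hαβ.symm) hnot
    rw [hf, MvPolynomial.coeff_sum]
    refine Finset.sum_pos' (fun i _ => ?_) ⟨j, Finset.mem_univ j, ?_⟩
    · have := hcoeff i
      rw [show MvPolynomial.coeff α (p i ^ 2) = (p i ^ 2).coeff α from rfl, this]
      exact sq_nonneg _
    · have := hcoeff j
      rw [show MvPolynomial.coeff α (p j ^ 2) = (p j ^ 2).coeff α from rfl, this]
      exact pow_two_pos_of_ne_zero (MvPolynomial.mem_support_iff.1 hβ)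
  -- reverse inclusion
  have hB : (2 : ℝ) • convexHull ℝ E ⊆ newtonPolytope f := by
    have hS : (2 : ℝ) • convexHull ℝ E = convexHull ℝ ((2 : ℝ) • E) :=
      (convexHull_smul _ _).symm
    have hcomp : IsCompact ((2 : ℝ) • convexHull ℝ E) := by
      rw [hS]
      exact Set.Finite.isCompact_convexHull ℝ (hEfin.smul_set)
    have hconv : Convex ℝ ((2 : ℝ) • convexHull ℝ E) := (convex_convexHull ℝ E).smul 2
    have hKM := closure_convexHull_extremePoints hcomp hconv
    have hsub : Set.extremePoints ℝ ((2 : ℝ) • convexHull ℝ E)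
        ⊆ stmt17Emb '' (f.support : Set (Fin n →₀ ℕ)) := by
      intro v hv
      have hv2 : v ∈ (2 : ℝ) • E := by
        apply extremePoints_convexHull_subset (𝕜 := ℝ) (A := (2:ℝ) • E)
        rw [convexHull_smul]
        exact hv
      obtain ⟨w, hwE, rfl⟩ := hv2
      obtain ⟨j, hj⟩ := Set.mem_iUnion.1 hwE
      obtain ⟨β, hβ, rfl⟩ := hj
      have h2 : (2 : ℝ) • stmt17Emb β = stmt17Emb (β + β) := by
        rw [stmt17Emb_add]
        exact two_smul ℝ (stmt17Emb β)
      have hv' : stmt17Emb (β + β) ∈ Set.extremePoints ℝ ((2 : ℝ) • convexHull ℝ E) := by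
        rw [← h2]; exact hv
      have hpos := hkey _ hv'
      refine ⟨β + β, ?_, h2.symm⟩
      simp only [Finset.mem_coe, MvPolynomial.mem_support_iff]
      exact hpos.ne'
    calc (2 : ℝ) • convexHull ℝ E
        = closure (convexHull ℝ (Set.extremePoints ℝ ((2 : ℝ) • convexHull ℝ E))) := hKM.symm
      _ ⊆ closure (convexHull ℝ (stmt17Emb '' (f.support : Set (Fin n →₀ ℕ)))) :=
          closure_mono (convexHull_mono hsub)
      _ = newtonPolytope f := by
          rw [hnf]
          exact (Set.Finite.isClosed_convexHull ℝ
            (f.support.finite_toSet.image _)).closure_eq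
  have hmain : newtonPolytope f = (2 : ℝ) • convexHull ℝ E := Set.Subset.antisymm hA hB
  refine ⟨?_, ?_, ?_⟩
  · rw [hconvE]; exact hmain
  · intro α hα
    rw [hmain] at hα
    exact hkey α hα
  · intro i
    rw [hmain, smul_smul]
    rw [show ((2:ℝ)⁻¹ * 2) = 1 by norm_num, one_smul]
    rw [hnp i, hE]
    exact convexHull_mono
      (Set.subset_iUnion (fun j => stmt17Emb '' ((p j).support : Set (Fin n →₀ ℕ))) i)
end

section
/- (Abstract Positivstellensatz) Let A be a commutative ring, T ⊆ A a preorder, and a ∈ A. Then â > 0 on Sper(A, T) (i.e., a ∈ P∖(-P) for every prime cone P ⊇ T) if and only if there exists t ∈ T with t·a ∈ 1 + T. -/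
/-- A preorder of a commutative ring `A`: contains all squares and is closed under
addition and multiplication. -/
def IsRingPreordering {A : Type*} [CommRing A] (T : Set A) : Prop :=
  (∀ a : A, a ^ 2 ∈ T) ∧ (∀ a ∈ T, ∀ b ∈ T, a + b ∈ T) ∧ (∀ a ∈ T, ∀ b ∈ T, a * b ∈ T)

/-- A prime cone of a commutative ring `A`. -/
def IsPrimeCone {A : Type*} [CommRing A] (P : Set A) : Prop :=
  (∀ a ∈ P, ∀ b ∈ P, a + b ∈ P) ∧ (∀ a ∈ P, ∀ b ∈ P, a * b ∈ P) ∧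
    (∀ a : A, a ∈ P ∨ -a ∈ P) ∧ (-1 : A) ∉ P ∧
    ∀ a b : A, a * b ∈ P → a ∈ P ∨ -b ∈ P

/-- Abstract Positivstellensatz: `â > 0` on `Sper(A,T)` iff `t·a ∈ 1 + T` for
some `t ∈ T`. -/
theorem stmt18 {A : Type*} [CommRing A] (T : Set A) (hT : IsRingPreordering T)
    (a : A) :
    (∀ P : Set A, IsPrimeCone P → T ⊆ P → a ∈ P ∧ -a ∉ P) ↔
      ∃ t ∈ T, ∃ t' ∈ T, t * a = 1 + t' := by
  obtain ⟨hsq, hadd, hmul⟩ := hT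
  have h1 : (1 : A) ∈ T := by simpa using hsq 1
  have h0 : (0 : A) ∈ T := by simpa using hsq 0
  constructor
  · intro h
    by_contra hc
    push_neg at hc
    set T₁ : Set A := {x | ∃ s ∈ T, ∃ s' ∈ T, x = s - a * s'} with hT₁def
    have hT₁pre : IsRingPreordering T₁ := by
      refine ⟨?_, ?_, ?_⟩
      · intro b; exact ⟨b ^ 2, hsq b, 0, h0, by ring⟩
      · rintro _ ⟨s, hs, s', hs', rfl⟩ _ ⟨t, ht, t', ht', rfl⟩
        exact ⟨s + t, hadd _ hs _ ht, s' + t', hadd _ hs' _ ht', by ring⟩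
      · rintro _ ⟨s, hs, s', hs', rfl⟩ _ ⟨t, ht, t', ht', rfl⟩
        exact ⟨s * t + a ^ 2 * (s' * t'),
          hadd _ (hmul _ hs _ ht) _ (hmul _ (hsq a) _ (hmul _ hs' _ ht')),
          s * t' + s' * t, hadd _ (hmul _ hs _ ht') _ (hmul _ hs' _ ht), by ring⟩
    have hTsub : T ⊆ T₁ := fun x hx => ⟨x, hx, 0, h0, by ring⟩
    have hnaT₁ : -a ∈ T₁ := ⟨0, h0, 1, h1, by ring⟩
    have hn1 : (-1 : A) ∉ T₁ := by
      rintro ⟨s, hs, s', hs', heq⟩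
      exact hc s' hs' s hs (by linear_combination heq)
    set 𝒮 : Set (Set A) := {S | IsRingPreordering S ∧ (-1 : A) ∉ S ∧ T₁ ⊆ S} with h𝒮def
    have hzorn : ∀ c ⊆ 𝒮, IsChain (· ⊆ ·) c → c.Nonempty →
        ∃ ub ∈ 𝒮, ∀ s ∈ c, s ⊆ ub := by
      intro c hc𝒮 hchain ⟨S₀, hS₀⟩
      refine ⟨⋃₀ c, ⟨⟨?_, ?_, ?_⟩, ?_, ?_⟩, fun s hs => Set.subset_sUnion_of_mem hs⟩
      · intro b; exact ⟨S₀, hS₀, (hc𝒮 hS₀).1.1 b⟩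
      · rintro x ⟨S₁, hS₁, hx⟩ y ⟨S₂, hS₂, hy⟩
        rcases hchain.total hS₁ hS₂ with hle | hle
        · exact ⟨S₂, hS₂, (hc𝒮 hS₂).1.2.1 _ (hle hx) _ hy⟩
        · exact ⟨S₁, hS₁, (hc𝒮 hS₁).1.2.1 _ hx _ (hle hy)⟩
      · rintro x ⟨S₁, hS₁, hx⟩ y ⟨S₂, hS₂, hy⟩
        rcases hchain.total hS₁ hS₂ with hle | hle
        · exact ⟨S₂, hS₂, (hc𝒮 hS₂).1.2.2 _ (hle hx) _ hy⟩
        · exact ⟨S₁, hS₁, (hc𝒮 hS₁).1.2.2 _ hx _ (hle hy)⟩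
      · rintro ⟨S₁, hS₁, hx⟩; exact (hc𝒮 hS₁).2.1 hx
      · exact fun x hx => ⟨S₀, hS₀, (hc𝒮 hS₀).2.2 hx⟩
    obtain ⟨M, hT₁M, hMmax⟩ := zorn_subset_nonempty 𝒮 hzorn T₁ ⟨hT₁pre, hn1, subset_rfl⟩
    obtain ⟨⟨Msq, Madd, Mmul⟩, Mn1, hT₁M'⟩ := hMmax.1
    have M0 : (0 : A) ∈ M := by simpa using Msq 0
    have M1 : (1 : A) ∈ M := by simpa using Msq 1
    have key : ∀ x : A, x ∉ M → ∃ s ∈ M, ∃ t ∈ M, (-1 : A) = s + x * t := by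
      intro x hx
      by_contra hk
      push_neg at hk
      set M' : Set A := {y | ∃ s ∈ M, ∃ t ∈ M, y = s + x * t} with hM'def
      have hM'𝒮 : M' ∈ 𝒮 := by
        refine ⟨⟨?_, ?_, ?_⟩, ?_, ?_⟩
        · intro b; exact ⟨b ^ 2, Msq b, 0, M0, by ring⟩
        · rintro _ ⟨s, hs, t, ht, rfl⟩ _ ⟨s', hs', t', ht', rfl⟩
          exact ⟨s + s', Madd _ hs _ hs', t + t', Madd _ ht _ ht', by ring⟩
        · rintro _ ⟨s, hs, t, ht, rfl⟩ _ ⟨s', hs', t', ht', rfl⟩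
          exact ⟨s * s' + x ^ 2 * (t * t'),
            Madd _ (Mmul _ hs _ hs') _ (Mmul _ (Msq x) _ (Mmul _ ht _ ht')),
            s * t' + t * s', Madd _ (Mmul _ hs _ ht') _ (Mmul _ ht _ hs'), by ring⟩
        · rintro ⟨s, hs, t, ht, heq⟩; exact hk s hs t ht heq
        · exact fun y hy => ⟨y, hT₁M' hy, 0, M0, by ring⟩
      have hMM' : M ⊆ M' := fun m hm => ⟨m, hm, 0, M0, by ring⟩
      have hM'M : M' ⊆ M := hMmax.2 hM'𝒮 hMM'
      exact hx (hM'M ⟨0, M0, 1, M1, by ring⟩)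
    have hprime : IsPrimeCone M := by
      refine ⟨Madd, Mmul, ?_, Mn1, ?_⟩
      · intro b
        by_contra hb
        push_neg at hb
        obtain ⟨s, hs, t, ht, h₁⟩ := key b hb.1
        obtain ⟨s', hs', t', ht', h₂⟩ := key (-b) hb.2
        have hmem : s + s' + s * s' + b ^ 2 * (t * t') ∈ M :=
          Madd _ (Madd _ (Madd _ hs _ hs') _ (Mmul _ hs _ hs')) _
            (Mmul _ (Msq b) _ (Mmul _ ht _ ht'))
        have : (-1 : A) ∈ M := by
          rwa [show s + s' + s * s' + b ^ 2 * (t * t') = -1 by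
            linear_combination (-(1 + s')) * h₁ + (b * t) * h₂] at hmem
        exact Mn1 this
      · intro b c hbc
        by_contra hb
        push_neg at hb
        obtain ⟨s, hs, t, ht, h₁⟩ := key b hb.1
        obtain ⟨s', hs', t', ht', h₂⟩ := key (-c) hb.2
        have hmem : b * c * (t * t') + s + s' + s * s' ∈ M :=
          Madd _ (Madd _ (Madd _ (Mmul _ hbc _ (Mmul _ ht _ ht')) _ hs) _ hs') _
            (Mmul _ hs _ hs')
        have : (-1 : A) ∈ M := by
          rwa [show b * c * (t * t') + s + s' + s * s' = -1 by
            linear_combination (-(1 + s')) * h₁ + (b * t) * h₂] at hmem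
        exact Mn1 this
    obtain ⟨haM, hnaM⟩ := h M hprime (fun x hx => hT₁M' (hTsub hx))
    exact hnaM (hT₁M' hnaT₁)
  · rintro ⟨t, ht, t', ht', heq⟩ P ⟨Padd, Pmul, Ptot, Pn1, Pprime⟩ hTP
    have hna : -a ∉ P := by
      intro hna
      have h1 : t * -a ∈ P := Pmul _ (hTP ht) _ hna
      have h2 : t * -a + t' ∈ P := Padd _ h1 _ (hTP ht')
      have : (-1 : A) ∈ P := by
        rwa [show t * -a + t' = -1 by linear_combination -heq] at h2
      exact Pn1 this
    rcases Ptot a with ha | ha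
    · exact ⟨ha, hna⟩
    · exact absurd ha hna
end

section
/- (Abstract Archimedean Positivstellensatz) Let A be a commutative ring, T ⊆ A an Archimedean preorder (for every a ∈ A there is N ∈ ℕ with N + a ∈ T), and a ∈ A with â > 0 on Sper(A,T), i.e., a ∈ P∖(-P) for every prime cone P of A containing T. Then there exists N ∈ ℕ such that N·a ∈ 1 + T. -/
namespace Stmt19Aux

variable {A : Type*} [CommRing A]

theorem zero_mem {T : Set A} (hT : IsRingPreordering T) : (0 : A) ∈ T := by
  have := hT.1 0; simpa using this

theorem one_mem {T : Set A} (hT : IsRingPreordering T) : (1 : A) ∈ T := by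
  have := hT.1 1; simpa using this

theorem add_mem {T : Set A} (hT : IsRingPreordering T) {x y : A} (hx : x ∈ T) (hy : y ∈ T) :
    x + y ∈ T := hT.2.1 x hx y hy

theorem mul_mem {T : Set A} (hT : IsRingPreordering T) {x y : A} (hx : x ∈ T) (hy : y ∈ T) :
    x * y ∈ T := hT.2.2 x hx y hy

theorem natCast_mem {T : Set A} (hT : IsRingPreordering T) : ∀ n : ℕ, (n : A) ∈ T
  | 0 => by simpa using zero_mem hT
  | n + 1 => by push_cast; exact add_mem hT (natCast_mem hT n) (one_mem hT)

theorem pow_mem {T : Set A} (hT : IsRingPreordering T) {x : A} (hx : x ∈ T) :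
    ∀ n : ℕ, x ^ n ∈ T
  | 0 => by simpa using one_mem hT
  | n + 1 => by rw [pow_succ]; exact mul_mem hT (pow_mem hT hx n) hx

theorem sum_mem {T : Set A} (hT : IsRingPreordering T) {ι : Type*} {s : Finset ι} {f : ι → A}
    (h : ∀ i ∈ s, f i ∈ T) : (∑ i ∈ s, f i) ∈ T :=
  Finset.sum_induction f (· ∈ T) (fun a b ha hb => hT.2.1 a ha b hb) (zero_mem hT) h

theorem nat_helper (P : ℕ) : ∀ m : ℕ, P ^ (m + 1) + (m + 1) * P ^ m ≤ (P + 1) ^ (m + 1) := by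
  intro m
  induction m with
  | zero => simp
  | succ m ih =>
    calc P ^ (m + 1 + 1) + (m + 1 + 1) * P ^ (m + 1)
        ≤ (P ^ (m + 1) + (m + 1) * P ^ m) * (P + 1) := by
          have e : (P ^ (m + 1) + (m + 1) * P ^ m) * (P + 1)
              = (P ^ (m + 1 + 1) + (m + 1 + 1) * P ^ (m + 1)) + (m + 1) * P ^ m := by ring
          rw [e]; exact Nat.le_add_right _ _
      _ ≤ (P + 1) ^ (m + 1) * (P + 1) := Nat.mul_le_mul_right _ ih
      _ = (P + 1) ^ (m + 1 + 1) := by ring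

theorem nat_main (k l : ℕ) (hk : 1 ≤ k) (hl : 1 ≤ l) :
    ∃ m : ℕ, 1 + l * (k * l - 1) ^ (m + 1) ≤ l ^ (m + 1) * k ^ m := by
  have hK : 1 ≤ k * l := le_trans hk (Nat.le_mul_of_pos_right k hl)
  rcases Nat.lt_or_ge (k * l) 2 with h2 | h2
  · have hkl : k * l = 1 := by omega
    have hk1 : k = 1 := by nlinarith
    have hl1 : l = 1 := by nlinarith
    exact ⟨0, by simp [hk1, hl1]⟩
  · set P := k * l - 1 with hP
    have hP1 : 1 ≤ P := by omega
    have hPK : P + 1 = k * l := by omega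
    set n := P * (k + P + 1) with hn
    have hn1 : 1 ≤ n := Nat.mul_pos hP1 (by omega)
    obtain ⟨m, hm⟩ : ∃ m, n = m + 1 := ⟨n - 1, by omega⟩
    refine ⟨m, ?_⟩
    have hpn1 : 1 ≤ P ^ n := Nat.one_le_pow n P (by omega)
    have hhelper : P ^ n + n * P ^ m ≤ (P + 1) ^ n := by rw [hm]; exact nat_helper P m
    have hstep : (k + P + 1) * P ^ n ≤ n * P ^ m := by
      have e : n * P ^ m = (k + P + 1) * (P * P ^ m) := by rw [hn]; ring
      have e2 : P * P ^ m = P ^ n := by rw [hm, pow_succ]; ring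
      rw [e, e2]
    have hKv : k + (k * l) * P ^ n ≤ (k * l) ^ n := by
      have h3 : k + (k * l) * P ^ n ≤ (k + P + 1) * P ^ n := by
        have e : (k + P + 1) * P ^ n = k * P ^ n + (P + 1) * P ^ n := by ring
        have e2 : k ≤ k * P ^ n := Nat.le_mul_of_pos_right k hpn1
        rw [e, hPK]
        omega
      calc k + (k * l) * P ^ n ≤ (k + P + 1) * P ^ n := h3
        _ ≤ n * P ^ m := hstep
        _ ≤ P ^ n + n * P ^ m := Nat.le_add_left _ _
        _ ≤ (P + 1) ^ n := hhelper
        _ = (k * l) ^ n := by rw [hPK]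
    have hfin : k * (1 + l * P ^ (m + 1)) ≤ k * (l ^ (m + 1) * k ^ m) := by
      have e1 : k * (1 + l * P ^ (m + 1)) = k + (k * l) * P ^ (m + 1) := by ring
      have e2 : k * (l ^ (m + 1) * k ^ m) = (k * l) ^ (m + 1) := by ring
      rw [e1, e2, ← hm]
      exact hKv
    exact Nat.le_of_mul_le_mul_left hfin (by omega)

/-- Key lemma: if `a * t ∈ 1 + T` for some `t ∈ T` and `T` is Archimedean, then
`N * a ∈ 1 + T` for some positive `N`. -/
theorem key {T : Set A} (hT : IsRingPreordering T)
    (harch : ∀ a : A, ∃ N : ℕ, (N : A) + a ∈ T) {a t m₀ : A}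
    (ht : t ∈ T) (hm : m₀ ∈ T) (heq : a * t = 1 + m₀) :
    ∃ N : ℕ, 0 < N ∧ ∃ s ∈ T, (N : A) * a = 1 + s := by
  obtain ⟨k₀, hk₀⟩ := harch (-t)
  obtain ⟨l₁, hl₁⟩ := harch a
  obtain ⟨l₂, hl₂⟩ := harch (-a)
  obtain ⟨k, hkdef⟩ : ∃ k : ℕ, k = k₀ + 1 := ⟨_, rfl⟩
  obtain ⟨l, hldef⟩ : ∃ l : ℕ, l = l₁ + l₂ + 1 := ⟨_, rfl⟩
  have hk : 1 ≤ k := by omega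
  have hl : 1 ≤ l := by omega
  obtain ⟨u, hudef⟩ : ∃ u : A, u = (k : A) - t := ⟨_, rfl⟩
  have hu : u ∈ T := by
    have h := add_mem hT hk₀ (one_mem hT)
    have e : u = ((k₀ : A) + -t) + 1 := by rw [hudef, hkdef]; push_cast; ring
    rw [e]; exact h
  have hla : (l : A) + a ∈ T := by
    have h := add_mem hT hl₁ (natCast_mem hT (l₂ + 1))
    have e : (l : A) + a = ((l₁ : A) + a) + ((l₂ + 1 : ℕ) : A) := by
      rw [hldef]; push_cast; ring
    rw [e]; exact h
  have hl_a : (l : A) - a ∈ T := by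
    have h := add_mem hT hl₂ (natCast_mem hT (l₁ + 1))
    have e : (l : A) - a = ((l₂ : A) + -a) + ((l₁ + 1 : ℕ) : A) := by
      rw [hldef]; push_cast; ring
    rw [e]; exact h
  have hlt : (l : A) * t - 1 ∈ T := by
    have h := add_mem hT (mul_mem hT hl_a ht) hm
    have e : (l : A) * t - 1 = ((l : A) - a) * t + m₀ := by linear_combination heq
    rw [e]; exact h
  obtain ⟨m, hmain⟩ := nat_main k l hk hl
  obtain ⟨n, hndef⟩ : ∃ n : ℕ, n = m + 1 := ⟨_, rfl⟩
  obtain ⟨r, hrdef⟩ : ∃ r : ℕ, r = k * l - 1 := ⟨_, rfl⟩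
  rw [← hrdef, ← hndef] at hmain
  have hkl1 : 1 ≤ k * l := le_trans hk (Nat.le_mul_of_pos_right k hl)
  have hrA : (r : A) = (k : A) * (l : A) - 1 := by
    rw [hrdef, Nat.cast_sub hkl1]; push_cast; ring
  obtain ⟨c, hc⟩ := Nat.le.dest hmain
  obtain ⟨S, hSdef⟩ : ∃ S : A, S = ∑ i ∈ Finset.range n, (k : A) ^ i * u ^ (n - 1 - i) :=
    ⟨_, rfl⟩
  obtain ⟨S₂, hS₂def⟩ :
      ∃ S₂ : A, S₂ = ∑ i ∈ Finset.range n, (r : A) ^ i * ((l : A) * u) ^ (n - 1 - i) :=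
    ⟨_, rfl⟩
  have hid1 : S * t = (k : A) ^ n - u ^ n := by
    have h := geom_sum₂_mul (k : A) u n
    have e : (k : A) - u = t := by rw [hudef]; ring
    rw [e] at h
    rw [hSdef]
    exact h
  have hid2 : S₂ * ((l : A) * t - 1) = (r : A) ^ n - ((l : A) * u) ^ n := by
    have h := geom_sum₂_mul (r : A) ((l : A) * u) n
    have e : (r : A) - (l : A) * u = (l : A) * t - 1 := by rw [hrA, hudef]; ring
    rw [e] at h
    rw [hS₂def]
    exact h
  have hkT : (k : A) ∈ T := natCast_mem hT k
  have hlT : (l : A) ∈ T := natCast_mem hT l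
  have hS : S ∈ T := by
    rw [hSdef]
    exact sum_mem hT (fun i _ => mul_mem hT (pow_mem hT hkT i) (pow_mem hT hu _))
  have hS' : S - (k : A) ^ m ∈ T := by
    have e : S = (∑ i ∈ Finset.range m, (k : A) ^ i * u ^ (n - 1 - i)) + (k : A) ^ m := by
      rw [hSdef, hndef, Finset.sum_range_succ]
      congr 1
      have e0 : m + 1 - 1 - m = 0 := by omega
      rw [e0, pow_zero, mul_one]
    have e2 : S - (k : A) ^ m = ∑ i ∈ Finset.range m, (k : A) ^ i * u ^ (n - 1 - i) := by
      rw [e]; ring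
    rw [e2]
    exact sum_mem hT (fun i _ => mul_mem hT (pow_mem hT hkT i) (pow_mem hT hu _))
  have hS₂ : S₂ ∈ T := by
    rw [hS₂def]
    exact sum_mem hT (fun i _ =>
      mul_mem hT (pow_mem hT (natCast_mem hT r) i) (pow_mem hT (mul_mem hT hlT hu) _))
  refine ⟨(k * l) ^ n, by positivity, ?_⟩
  refine ⟨(c : A) + ((l : A) ^ n * m₀ * S + (l : A) ^ n * (S - (k : A) ^ m)
    + ((l : A) + a) * ((l : A) * u) ^ n + (l : A) * (S₂ * ((l : A) * t - 1))), ?_, ?_⟩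
  · exact add_mem hT (natCast_mem hT c)
      (add_mem hT (add_mem hT (add_mem hT
        (mul_mem hT (mul_mem hT (pow_mem hT hlT n) hm) hS)
        (mul_mem hT (pow_mem hT hlT n) hS'))
        (mul_mem hT hla (pow_mem hT (mul_mem hT hlT hu) n)))
        (mul_mem hT hlT (mul_mem hT hS₂ hlt)))
  · have hcA : (1 : A) + (l : A) * (r : A) ^ n + (c : A) = (l : A) ^ n * (k : A) ^ m := by
      have h' := congrArg (fun x : ℕ => (x : A)) hc
      push_cast at h'
      linear_combination h'
    have hNcast : (((k * l) ^ n : ℕ) : A) = ((k : A) * (l : A)) ^ n := by push_cast; ring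
    rw [hNcast]
    linear_combination ((l : A) ^ n * S) * heq - ((l : A) ^ n * a) * hid1 - (l : A) * hid2 - hcA

/-- Every proper preordering extends to a prime cone. -/
theorem exists_primecone {T₁ : Set A} (h1 : IsRingPreordering T₁) (h2 : (-1 : A) ∉ T₁) :
    ∃ P : Set A, IsPrimeCone P ∧ T₁ ⊆ P := by
  set SS : Set (Set A) := {P : Set A | IsRingPreordering P ∧ (-1 : A) ∉ P} with hSS
  have hzorn : ∀ c ⊆ SS, IsChain (· ⊆ ·) c → c.Nonempty → ∃ ub ∈ SS, ∀ s ∈ c, s ⊆ ub := by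
    intro c hcS hchain hcne
    refine ⟨⋃₀ c, ⟨⟨?_, ?_, ?_⟩, ?_⟩, fun s hs => Set.subset_sUnion_of_mem hs⟩
    · intro x
      obtain ⟨P₀, hP₀⟩ := hcne
      exact ⟨P₀, hP₀, (hcS hP₀).1.1 x⟩
    · rintro x ⟨Px, hPx, hx⟩ y ⟨Py, hPy, hy⟩
      rcases hchain.total hPx hPy with h | h
      · exact ⟨Py, hPy, (hcS hPy).1.2.1 x (h hx) y hy⟩
      · exact ⟨Px, hPx, (hcS hPx).1.2.1 x hx y (h hy)⟩
    · rintro x ⟨Px, hPx, hx⟩ y ⟨Py, hPy, hy⟩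
      rcases hchain.total hPx hPy with h | h
      · exact ⟨Py, hPy, (hcS hPy).1.2.2 x (h hx) y hy⟩
      · exact ⟨Px, hPx, (hcS hPx).1.2.2 x hx y (h hy)⟩
    · rintro ⟨P₀, hP₀, h⟩
      exact (hcS hP₀).2 h
  obtain ⟨P, hTP, hPmax⟩ := zorn_subset_nonempty SS hzorn T₁ ⟨h1, h2⟩
  have hPpre : IsRingPreordering P := hPmax.prop.1
  have hPn1 : (-1 : A) ∉ P := hPmax.prop.2
  have hext : ∀ b : A, b ∉ P → ∃ p ∈ P, ∃ q ∈ P, (-1 : A) = p + b * q := by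
    intro b hb
    by_contra hcon
    push_neg at hcon
    set Pb : Set A := {x : A | ∃ p ∈ P, ∃ q ∈ P, x = p + b * q} with hPb
    have hPbpre : IsRingPreordering Pb := by
      refine ⟨fun x => ⟨x ^ 2, hPpre.1 x, 0, zero_mem hPpre, by ring⟩, ?_, ?_⟩
      · rintro x ⟨p, hp, q, hq, rfl⟩ y ⟨p', hp', q', hq', rfl⟩
        exact ⟨p + p', add_mem hPpre hp hp', q + q', add_mem hPpre hq hq', by ring⟩
      · rintro x ⟨p, hp, q, hq, rfl⟩ y ⟨p', hp', q', hq', rfl⟩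
        refine ⟨p * p' + b ^ 2 * (q * q'),
          add_mem hPpre (mul_mem hPpre hp hp')
            (mul_mem hPpre (hPpre.1 b) (mul_mem hPpre hq hq')),
          p * q' + p' * q,
          add_mem hPpre (mul_mem hPpre hp hq') (mul_mem hPpre hp' hq), by ring⟩
    have hPbn1 : (-1 : A) ∉ Pb := by
      rintro ⟨p, hp, q, hq, he⟩
      exact hcon p hp q hq he
    have hsub : P ⊆ Pb := fun x hx => ⟨x, hx, 0, zero_mem hPpre, by ring⟩
    have hPbsub : Pb ⊆ P := hPmax.2 ⟨hPbpre, hPbn1⟩ hsub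
    exact hb (hPbsub ⟨0, zero_mem hPpre, 1, one_mem hPpre, by ring⟩)
  have htot : ∀ b : A, b ∈ P ∨ -b ∈ P := by
    intro b
    by_contra hcon
    push_neg at hcon
    obtain ⟨p, hp, q, hq, e1⟩ := hext b hcon.1
    obtain ⟨p', hp', q', hq', e2⟩ := hext (-b) hcon.2
    apply hPn1
    have e : (-1 : A) = p + p' + p * p' + b ^ 2 * (q * q') := by
      linear_combination (1 + p') * e1 - (b * q) * e2
    rw [e]
    exact add_mem hPpre (add_mem hPpre (add_mem hPpre hp hp') (mul_mem hPpre hp hp'))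
      (mul_mem hPpre (hPpre.1 b) (mul_mem hPpre hq hq'))
  have hprime : ∀ x y : A, x * y ∈ P → x ∈ P ∨ -y ∈ P := by
    intro x y hxy
    by_contra hcon
    push_neg at hcon
    obtain ⟨p, hp, q, hq, e1⟩ := hext x hcon.1
    obtain ⟨p', hp', q', hq', e2⟩ := hext (-y) hcon.2
    apply hPn1
    have e : (-1 : A) = p + p' + p * p' + (x * y) * (q * q') := by
      linear_combination (1 + p') * e1 - (x * q) * e2
    rw [e]
    exact add_mem hPpre (add_mem hPpre (add_mem hPpre hp hp') (mul_mem hPpre hp hp'))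
      (mul_mem hPpre hxy (mul_mem hPpre hq hq'))
  exact ⟨P, ⟨fun x hx y hy => hPpre.2.1 x hx y hy, fun x hx y hy => hPpre.2.2 x hx y hy,
    htot, hPn1, hprime⟩, hTP⟩

end Stmt19Aux

/-- Abstract Archimedean Positivstellensatz: if `T` is an Archimedean preorder of a
commutative ring `A` and `â > 0` on `Sper(A,T)`, then `N·a ∈ 1 + T` for some
positive integer `N`. -/
theorem stmt19 {A : Type*} [CommRing A] (T : Set A) (hT : IsRingPreordering T)
    (harch : ∀ a : A, ∃ N : ℕ, (N : A) + a ∈ T) (a : A)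
    (hpos : ∀ P : Set A, IsPrimeCone P → T ⊆ P → a ∈ P ∧ -a ∉ P) :
    ∃ N : ℕ, 0 < N ∧ ∃ t ∈ T, (N : A) * a = 1 + t := by
  open Stmt19Aux in
  by_cases hcase : ∃ t ∈ T, ∃ m ∈ T, a * t = 1 + m
  · obtain ⟨t, ht, m, hm, he⟩ := hcase
    exact Stmt19Aux.key hT harch ht hm he
  · push_neg at hcase
    exfalso
    set T₁ : Set A := {x : A | ∃ s ∈ T, ∃ m ∈ T, x = s - a * m} with hT₁
    have h1 : IsRingPreordering T₁ := by
      refine ⟨fun x => ⟨x ^ 2, hT.1 x, 0, Stmt19Aux.zero_mem hT, by ring⟩, ?_, ?_⟩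
      · rintro x ⟨s, hs, m, hm, rfl⟩ y ⟨s', hs', m', hm', rfl⟩
        exact ⟨s + s', Stmt19Aux.add_mem hT hs hs', m + m', Stmt19Aux.add_mem hT hm hm',
          by ring⟩
      · rintro x ⟨s, hs, m, hm, rfl⟩ y ⟨s', hs', m', hm', rfl⟩
        refine ⟨s * s' + a ^ 2 * (m * m'),
          Stmt19Aux.add_mem hT (Stmt19Aux.mul_mem hT hs hs')
            (Stmt19Aux.mul_mem hT (hT.1 a) (Stmt19Aux.mul_mem hT hm hm')),
          s * m' + s' * m,
          Stmt19Aux.add_mem hT (Stmt19Aux.mul_mem hT hs hm')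
            (Stmt19Aux.mul_mem hT hs' hm), by ring⟩
    have h2 : (-1 : A) ∉ T₁ := by
      rintro ⟨s, hs, m, hm, he⟩
      exact hcase m hm s hs (by linear_combination he)
    obtain ⟨P, hP, hsub⟩ := Stmt19Aux.exists_primecone h1 h2
    have hTsub : T ⊆ P := fun x hx => hsub ⟨x, hx, 0, Stmt19Aux.zero_mem hT, by ring⟩
    obtain ⟨_, hnaP⟩ := hpos P hP hTsub
    exact hnaP (hsub ⟨0, Stmt19Aux.zero_mem hT, 1, Stmt19Aux.one_mem hT, by ring⟩)
end
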